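/- arXiv:2107.01287 — 2 statements merged into one kernel-verified Lean document; each statement's English description precedes it below -/
import Mathlib

section
/- Let p ∈ (0,1). There exists η > 0 such that if K is an origin-symmetric convex body in ℝⁿ of class C^{2,+} with ‖1 − h_K‖_{C²(𝕊^{n−1})} ≤ η, then for every t ∈ [0,1] the function h_t := [(1−t) + t h_K^p]^{1/p} on 𝕊^{n−1} is the support function of an origin-symmetric convex body of class C^{2,+} (equivalently, h_t ∈ C²(𝕊^{n−1}) and Q[h_t] > 0 on 𝕊^{n−1}). -/
open Metric MeasureTheory Filter
open scoped RealInnerProductSpace Pointwise Topology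

noncomputable section

/-- Euclidean `n`-space. -/
abbrev Eucl (n : ℕ) : Type := EuclideanSpace ℝ (Fin n)

/-- The support function of a set `K ⊆ ℝⁿ`. -/
def suppFn {n : ℕ} (K : Set (Eucl n)) (x : Eucl n) : ℝ :=
  sSup ((fun y => ⟪x, y⟫) '' K)

/-- The Wulff shape (Aleksandrov body) of a function `f`. -/
def wulff {n : ℕ} (f : Eucl n → ℝ) : Set (Eucl n) :=
  {x | ∀ y : Eucl n, ‖y‖ = 1 → ⟪x, y⟫ ≤ f y}

/-- The `p`-convex combination `(1-t)·K₀ +_p t·K₁` (for `p > 0`). -/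
def pComb {n : ℕ} (p t : ℝ) (K₀ K₁ : Set (Eucl n)) : Set (Eucl n) :=
  wulff (fun y => ((1 - t) * suppFn K₀ y ^ p + t * suppFn K₁ y ^ p) ^ (1 / p))

/-- The `0`-convex combination `(1-t)·K₀ +₀ t·K₁`. -/
def zeroComb {n : ℕ} (t : ℝ) (K₀ K₁ : Set (Eucl n)) : Set (Eucl n) :=
  wulff (fun y => suppFn K₀ y ^ (1 - t) * suppFn K₁ y ^ t)

/-- The `L_p` convex combination, `p ∈ [0,1)`. -/
def lpComb {n : ℕ} (p t : ℝ) (K₀ K₁ : Set (Eucl n)) : Set (Eucl n) :=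
  if p = 0 then zeroComb t K₀ K₁ else pComb p t K₀ K₁

/-- A convex body: a nonempty compact convex set. -/
def IsConvexBody {n : ℕ} (K : Set (Eucl n)) : Prop :=
  Convex ℝ K ∧ IsCompact K ∧ K.Nonempty

/-- `κ_j`, the volume of the unit ball of `ℝʲ`. -/
def kappa (j : ℕ) : ℝ := (volume (ball (0 : EuclideanSpace ℝ (Fin j)) 1)).toReal

/-- The `k`-th intrinsic volume of `K ⊆ ℝⁿ`: by the Steiner formula, the volume of the
`ε`-neighbourhood of `K` is the polynomial `∑_j κ_{n-j} V_j(K) ε^{n-j}` in `ε`; we recover its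
coefficients by Lagrange interpolation at the `n+1` nodes `ε = 0, 1, …, n`. -/
def intrinsicVolume {n : ℕ} (k : ℕ) (K : Set (Eucl n)) : ℝ :=
  (Lagrange.interpolate (Finset.range (n + 1)) (fun i : ℕ => (i : ℝ))
      (fun i => (volume (cthickening (i : ℝ) K)).toReal)).coeff (n - k) / kappa (n - k)

/-- Second derivative (Hessian) of `f : ℝⁿ → ℝ` at `x` as a bilinear expression. -/
def hess2 {n : ℕ} (f : Eucl n → ℝ) (x u v : Eucl n) : ℝ :=
  fderiv ℝ (fderiv ℝ f) x u v

/-- The Hessian matrix of `f` at `x` in the standard coordinates.  For the positively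
`1`-homogeneous extension `f` of a `C²` function `φ` on `𝕊^{n-1}`, at a point `x ∈ 𝕊^{n-1}`
this matrix represents `Q[φ] = (φ_{ij} + φ δ_{ij})` on the tangent space `x^⊥`,
together with an extra zero eigenvalue in the radial direction `x`. -/
def hessMat {n : ℕ} (f : Eucl n → ℝ) (x : Eucl n) : Fin n → Fin n → ℝ :=
  fun i j => hess2 f x (EuclideanSpace.single i (1 : ℝ)) (EuclideanSpace.single j (1 : ℝ))

/-- `S_r(M)`: the `r`-th elementary symmetric function of the eigenvalues of a matrix `M`,
read off from the coefficients of the characteristic polynomial. -/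
def esymmFn (n : ℕ) (r : ℕ) (M : Fin n → Fin n → ℝ) : ℝ :=
  (-1 : ℝ) ^ r * (Matrix.charpoly (Matrix.of M)).coeff (n - r)

/-- The contraction `S_r^{ij}(A) B_{ij}` of the `r`-cofactor matrix of `A` with `B`,
i.e. the first derivative of `S_r` at `A` in direction `B`. -/
def Sder (n r : ℕ) (A B : Fin n → Fin n → ℝ) : ℝ :=
  fderiv ℝ (esymmFn n r) A B

/-- The contraction `S_r^{ij,kl}(A) B_{ij} C_{kl}`, i.e. the second derivative of `S_r`
at `A` in the directions `B, C`. -/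
def Sder2 (n r : ℕ) (A B C : Fin n → Fin n → ℝ) : ℝ :=
  fderiv ℝ (fun M => fderiv ℝ (esymmFn n r) M B) A C

/-- Integral over the unit sphere `𝕊^{n-1}` with respect to the surface measure, expressed
via polar coordinates: `∫_{𝕊^{n-1}} g dσ = n ∫_{B_n} g(x/‖x‖) dx`. -/
def sphInt (n : ℕ) (g : Eucl n → ℝ) : ℝ :=
  n * ∫ x in ball (0 : Eucl n) 1, g (‖x‖⁻¹ • x)

/-- Positively `1`-homogeneous functions on `ℝⁿ`. -/
def IsHomog1 {n : ℕ} (f : Eucl n → ℝ) : Prop :=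
  ∀ c : ℝ, 0 < c → ∀ x : Eucl n, f (c • x) = c * f x

/-- Positively `0`-homogeneous functions on `ℝⁿ`. -/
def IsHomog0 {n : ℕ} (f : Eucl n → ℝ) : Prop :=
  ∀ c : ℝ, 0 < c → ∀ x : Eucl n, f (c • x) = f x

/-- `C²` functions on the sphere, encoded as their positively `1`-homogeneous extensions. -/
def SphC2 (n : ℕ) : Set (Eucl n → ℝ) :=
  {f | IsHomog1 f ∧ ContDiffOn ℝ 2 f {(0 : Eucl n)}ᶜ}

/-- `C²` functions on the sphere, encoded as their positively `0`-homogeneous extensions. -/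
def SphC2z (n : ℕ) : Set (Eucl n → ℝ) :=
  {f | IsHomog0 f ∧ ContDiffOn ℝ 2 f {(0 : Eucl n)}ᶜ}

/-- `C^{2,+}(𝕊^{n-1})`: support functions of convex bodies of class `C^{2,+}`, i.e.
`1`-homogeneous functions, `C²` away from the origin, with `Q[h] > 0` (equivalently, the
Hessian of the homogeneous extension is positive definite on every tangent space `x^⊥`). -/
def C2Plus (n : ℕ) : Set (Eucl n → ℝ) :=
  {h | IsHomog1 h ∧ ContDiffOn ℝ 2 h {(0 : Eucl n)}ᶜ ∧
    ∀ x : Eucl n, ‖x‖ = 1 → ∀ v : Eucl n, v ≠ 0 → ⟪x, v⟫ = 0 → 0 < hess2 h x v v}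

/-- A convex body of class `C^{2,+}`. -/
def IsC2PlusBody {n : ℕ} (K : Set (Eucl n)) : Prop :=
  IsConvexBody K ∧ suppFn K ∈ C2Plus n

/-- The `C²(𝕊^{n-1})` norm of (the homogeneous extension of) a function on the sphere. -/
def sphC2Norm {n : ℕ} (f : Eucl n → ℝ) : ℝ :=
  sSup ((fun x => |f x| + ‖fderiv ℝ f x‖ + ‖fderiv ℝ (fderiv ℝ f) x‖) ''
    sphere (0 : Eucl n) 1)

/-- The spherical Laplacian (for a `0`-homogeneous extension, at points of the sphere, the
Euclidean Laplacian coincides with the Laplace–Beltrami operator on `𝕊^{n-1}`). -/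
def sphLap {n : ℕ} (f : Eucl n → ℝ) (x : Eucl n) : ℝ :=
  ∑ i : Fin n, hess2 f x (EuclideanSpace.single i (1 : ℝ)) (EuclideanSpace.single i (1 : ℝ))

/-- The path `h_s = h e^{sψ}` (with `ψ` `0`-homogeneous, so that `h_s` is `1`-homogeneous). -/
def pathFn {n : ℕ} (h ψ : Eucl n → ℝ) (s : ℝ) : Eucl n → ℝ :=
  fun x => h x * Real.exp (s * ψ x)

/-- `f_k(s) = (1/k) ∫_{𝕊^{n-1}} h_s S_{k-1}(Q[h_s]) dx` along the path `h_s = h e^{sψ}`. -/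
def fkFun {n : ℕ} (k : ℕ) (h ψ : Eucl n → ℝ) (s : ℝ) : ℝ :=
  (1 / (k : ℝ)) *
    sphInt n (fun x => pathFn h ψ s x * esymmFn n (k - 1) (hessMat (pathFn h ψ s) x))

namespace S15

variable {n : ℕ}

lemma diffAt_of_contDiffOn {f : Eucl n → ℝ} {s : Set (Eucl n)} (hs : IsOpen s)
    {x : Eucl n} (hx : x ∈ s) (hf : ContDiffOn ℝ 2 f s) : DifferentiableAt ℝ f x :=
  ((hf.differentiableOn (by norm_num)) x hx).differentiableAt (hs.mem_nhds hx)

lemma hasFDerivAt_fderiv {f : Eucl n → ℝ} {s : Set (Eucl n)} (hs : IsOpen s)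
    {x : Eucl n} (hx : x ∈ s) (hf : ContDiffOn ℝ 2 f s) :
    HasFDerivAt (fderiv ℝ f) (fderiv ℝ (fderiv ℝ f) x) x := by
  have h1 : ContDiffOn ℝ 1 (fderiv ℝ f) s := hf.fderiv_of_isOpen hs (by norm_num)
  exact ((h1.differentiableOn (by norm_num)) x hx).differentiableAt
    (hs.mem_nhds hx) |>.hasFDerivAt

/-- derivative of `z ↦ (fderiv f z) v`. -/
lemma hasFDerivAt_fderiv_apply {f : Eucl n → ℝ} {s : Set (Eucl n)} (hs : IsOpen s)
    {x : Eucl n} (hx : x ∈ s) (hf : ContDiffOn ℝ 2 f s) (v : Eucl n) :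
    HasFDerivAt (fun z => fderiv ℝ f z v)
      ((ContinuousLinearMap.apply ℝ ℝ v).comp (fderiv ℝ (fderiv ℝ f) x)) x :=
  (ContinuousLinearMap.apply ℝ ℝ v).hasFDerivAt.comp x (hasFDerivAt_fderiv hs hx hf)

lemma fderiv_fderiv_apply {f : Eucl n → ℝ} {s : Set (Eucl n)} (hs : IsOpen s)
    {x : Eucl n} (hx : x ∈ s) (hf : ContDiffOn ℝ 2 f s) (v u : Eucl n) :
    fderiv ℝ (fun z => fderiv ℝ f z v) x u = hess2 f x u v := by
  rw [(hasFDerivAt_fderiv_apply hs hx hf v).fderiv]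
  simp [hess2]

lemma hasDerivAt_line {f : Eucl n → ℝ} {y : Eucl n} (hd : DifferentiableAt ℝ f y)
    (x v : Eucl n) {s₀ : ℝ} (hy : y = x + s₀ • v) :
    HasDerivAt (fun s : ℝ => f (x + s • v)) (fderiv ℝ f y v) s₀ := by
  have hline : HasDerivAt (fun s : ℝ => x + s • v) v s₀ := by
    simpa using ((hasDerivAt_id s₀).smul_const v).const_add x
  subst hy
  exact hd.hasFDerivAt.comp_hasDerivAt s₀ hline

lemma hasDerivAt_line_fderiv {f : Eucl n → ℝ} {s : Set (Eucl n)} (hs : IsOpen s)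
    (hf : ContDiffOn ℝ 2 f s) (x v u : Eucl n) {s₀ : ℝ} {y : Eucl n}
    (hy : y = x + s₀ • v) (hmem : y ∈ s) :
    HasDerivAt (fun s : ℝ => fderiv ℝ f (x + s • v) u) (hess2 f y v u) s₀ := by
  have hline : HasDerivAt (fun s : ℝ => x + s • v) v s₀ := by
    simpa using ((hasDerivAt_id s₀).smul_const v).const_add x
  subst hy
  have := (hasFDerivAt_fderiv_apply hs hmem hf u).comp_hasDerivAt s₀ hline
  exact this

lemma hess2_symm {f : Eucl n → ℝ} {s : Set (Eucl n)} (hs : IsOpen s)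
    {x : Eucl n} (hx : x ∈ s) (hf : ContDiffOn ℝ 2 f s) (u v : Eucl n) :
    hess2 f x u v = hess2 f x v u := by
  have hev : ∀ᶠ y in 𝓝 x, HasFDerivAt f (fderiv ℝ f y) y := by
    filter_upwards [hs.mem_nhds hx] with y hy
    exact (diffAt_of_contDiffOn hs hy hf).hasFDerivAt
  exact second_derivative_symmetric_of_eventually hev (hasFDerivAt_fderiv hs hx hf) u v


lemma homog1_zero {f : Eucl n → ℝ} (hf : IsHomog1 f) : f 0 = 0 := by
  have := hf 2 (by norm_num) 0
  rw [smul_zero] at this; linarith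

lemma homog1_norm {f : Eucl n → ℝ} (hf : IsHomog1 f) (x : Eucl n) (hx : x ≠ 0) :
    f x = ‖x‖ * f (‖x‖⁻¹ • x) := by
  have hn : (0:ℝ) < ‖x‖ := norm_pos_iff.2 hx
  have := hf ‖x‖ hn (‖x‖⁻¹ • x)
  rw [smul_smul, mul_inv_cancel₀ hn.ne', one_smul] at this
  linarith

variable {F : Eucl n → ℝ} (hF1 : IsHomog1 F)
  (hF : ContDiffOn ℝ 2 F ({(0 : Eucl n)}ᶜ))

section
include hF1 hF

lemma fderiv_homog {c : ℝ} (hc : 0 < c) {y : Eucl n} (hy : y ≠ 0) :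
    fderiv ℝ F (c • y) = fderiv ℝ F y := by
  have hcy : c • y ≠ 0 := smul_ne_zero hc.ne' hy
  have hso : IsOpen ({(0 : Eucl n)}ᶜ) := isOpen_compl_singleton
  have hcomp : (fun z : Eucl n => F (c • z)) = fun z => c * F z := by
    funext z
    rcases eq_or_ne z 0 with rfl | hz
    · simp [homog1_zero hF1]
    · exact hF1 c hc z
  have hlin : HasFDerivAt (fun z : Eucl n => c • z)
      (c • ContinuousLinearMap.id ℝ (Eucl n)) y := by
    exact (c • ContinuousLinearMap.id ℝ (Eucl n)).hasFDerivAt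
  have h1 : HasFDerivAt (fun z : Eucl n => F (c • z))
      ((fderiv ℝ F (c • y)).comp (c • ContinuousLinearMap.id ℝ (Eucl n))) y :=
    HasFDerivAt.comp y (diffAt_of_contDiffOn hso hcy hF).hasFDerivAt hlin
  have h2 : HasFDerivAt (fun z : Eucl n => c * F z)
      (c • fderiv ℝ F y) y :=
    (diffAt_of_contDiffOn hso hy hF).hasFDerivAt.const_mul c
  rw [hcomp] at h1
  have := h1.unique h2
  ext v
  have happ := congrArg (fun (T : Eucl n →L[ℝ] ℝ) => T v) this
  simp only [ContinuousLinearMap.coe_comp', Function.comp_apply, ContinuousLinearMap.smul_apply,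
    ContinuousLinearMap.coe_id', id, ContinuousLinearMap.map_smul] at happ ⊢
  have : c * (fderiv ℝ F (c • y)) v = c * (fderiv ℝ F y) v := by
    simpa [smul_eq_mul] using happ
  exact mul_left_cancel₀ hc.ne' this

lemma euler {y : Eucl n} (hy : y ≠ 0) : fderiv ℝ F y y = F y := by
  have hso : IsOpen ({(0 : Eucl n)}ᶜ) := isOpen_compl_singleton
  have hline : HasDerivAt (fun s : ℝ => (0 : Eucl n) + s • y) y 1 := by
    simpa using ((hasDerivAt_id (1:ℝ)).smul_const y).const_add (0 : Eucl n)
  have h1 : HasDerivAt (fun s : ℝ => F ((0 : Eucl n) + s • y)) (fderiv ℝ F y y) 1 := by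
    have hd := (diffAt_of_contDiffOn hso hy hF).hasFDerivAt
    have hd' : HasFDerivAt F (fderiv ℝ F y) ((0:Eucl n) + (1:ℝ) • y) := by simpa using hd
    exact hd'.comp_hasDerivAt (f := fun s : ℝ => (0 : Eucl n) + s • y) 1 hline
  have heq : (fun s : ℝ => F ((0:Eucl n) + s • y)) =ᶠ[𝓝 (1:ℝ)] fun s => s * F y := by
    filter_upwards [isOpen_Ioi.mem_nhds (by norm_num : (0:ℝ) < 1)] with s hs
    simpa using hF1 s hs y
  have h2 : HasDerivAt (fun s : ℝ => s * F y) (fderiv ℝ F y y) 1 :=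
    h1.congr_of_eventuallyEq heq.symm
  have h3 : HasDerivAt (fun s : ℝ => s * F y) (F y) 1 := by
    simpa using (hasDerivAt_id (1:ℝ)).mul_const (F y)
  exact h2.unique h3


lemma hess2_radial {y : Eucl n} (hy : y ≠ 0) (v : Eucl n) : hess2 F y y v = 0 := by
  have hso : IsOpen ({(0 : Eucl n)}ᶜ) := isOpen_compl_singleton
  have h1 : HasDerivAt (fun s : ℝ => fderiv ℝ F ((0 : Eucl n) + s • y) v)
      (hess2 F y y v) 1 :=
    hasDerivAt_line_fderiv hso hF 0 y v (by simp) hy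
  have heq : (fun s : ℝ => fderiv ℝ F ((0:Eucl n) + s • y) v) =ᶠ[𝓝 (1:ℝ)]
      fun _ => fderiv ℝ F y v := by
    filter_upwards [isOpen_Ioi.mem_nhds (by norm_num : (0:ℝ) < 1)] with s hs
    rw [zero_add, fderiv_homog hF1 hF hs hy]
  have h2 : HasDerivAt (fun _ : ℝ => fderiv ℝ F y v) (hess2 F y y v) 1 :=
    h1.congr_of_eventuallyEq heq.symm
  exact h2.unique (hasDerivAt_const _ _)

lemma hess2_scaling {c : ℝ} (hc : 0 < c) {y : Eucl n} (hy : y ≠ 0) (u v : Eucl n) :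
    hess2 F (c • y) u v = c⁻¹ * hess2 F y u v := by
  have hso : IsOpen ({(0 : Eucl n)}ᶜ) := isOpen_compl_singleton
  have hcy : c • y ≠ 0 := smul_ne_zero hc.ne' hy
  have heq : (fun z : Eucl n => fderiv ℝ F (c • z) v) =ᶠ[𝓝 y]
      (fun z : Eucl n => fderiv ℝ F z v) := by
    filter_upwards [hso.mem_nhds hy] with z hz
    rw [fderiv_homog hF1 hF hc hz]
  have hlin : HasFDerivAt (fun z : Eucl n => c • z)
      (c • ContinuousLinearMap.id ℝ (Eucl n)) y :=
    (c • ContinuousLinearMap.id ℝ (Eucl n)).hasFDerivAt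
  have hA : HasFDerivAt (fun z : Eucl n => fderiv ℝ F (c • z) v)
      (((ContinuousLinearMap.apply ℝ ℝ v).comp (fderiv ℝ (fderiv ℝ F) (c • y))).comp
        (c • ContinuousLinearMap.id ℝ (Eucl n))) y :=
    HasFDerivAt.comp y (hasFDerivAt_fderiv_apply hso hcy hF v) hlin
  have e1 : fderiv ℝ (fun z : Eucl n => fderiv ℝ F (c • z) v) y
      = fderiv ℝ (fun z : Eucl n => fderiv ℝ F z v) y := heq.fderiv_eq
  rw [hA.fderiv] at e1
  have e2 := congrArg (fun (T : Eucl n →L[ℝ] ℝ) => T u) e1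
  simp only [ContinuousLinearMap.coe_comp', Function.comp_apply,
    ContinuousLinearMap.smul_apply, ContinuousLinearMap.coe_id', id,
    ContinuousLinearMap.apply_apply, ContinuousLinearMap.map_smul,
    fderiv_fderiv_apply hso hy hF v u] at e2
  have e3 : c * hess2 F (c • y) u v = hess2 F y u v := by
    simpa [hess2, smul_eq_mul] using e2
  field_simp
  linarith


end

section SuppFn
variable {K : Set (Eucl n)}

lemma bddAbove_inner_image (hK : IsCompact K) (x : Eucl n) :
    BddAbove ((fun y => ⟪x, y⟫) '' K) :=
  (hK.image ((continuous_const (y := x)).inner continuous_id)).bddAbove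

lemma suppFn_le_of_mem (hK : IsCompact K) {x z : Eucl n} (hz : z ∈ K) :
    ⟪x, z⟫ ≤ suppFn K x :=
  le_csSup (bddAbove_inner_image hK x) (Set.mem_image_of_mem _ hz)

lemma le_suppFn_iff (hK : IsCompact K) (hne : K.Nonempty) {x : Eucl n} {r : ℝ} :
    suppFn K x ≤ r ↔ ∀ z ∈ K, ⟪x, z⟫ ≤ r := by
  constructor
  · intro h z hz; exact (suppFn_le_of_mem hK hz).trans h
  · intro h
    exact csSup_le (hne.image _) (by rintro _ ⟨z, hz, rfl⟩; exact h z hz)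

lemma suppFn_zero (hne : K.Nonempty) : suppFn K 0 = 0 := by
  unfold suppFn
  have : (fun y : Eucl n => ⟪(0 : Eucl n), y⟫) '' K = {0} := by
    rw [show (fun y : Eucl n => ⟪(0 : Eucl n), y⟫) = fun _ => (0:ℝ) by
      funext y; exact inner_zero_left y]
    exact Set.Nonempty.image_const hne 0
  rw [this, csSup_singleton]

lemma suppFn_smul (hK : IsCompact K) (hne : K.Nonempty) {c : ℝ} (hc : 0 < c) (x : Eucl n) :
    suppFn K (c • x) = c * suppFn K x := by
  unfold suppFn
  have him : (fun y : Eucl n => ⟪c • x, y⟫) '' K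
      = (fun r : ℝ => c * r) '' ((fun y : Eucl n => ⟪x, y⟫) '' K) := by
    rw [Set.image_image]
    exact Set.image_congr fun y _ => real_inner_smul_left x y c
  rw [him]
  set S := (fun y : Eucl n => ⟪x, y⟫) '' K with hS
  have hSne : S.Nonempty := hne.image _
  have hSb : BddAbove S := bddAbove_inner_image hK x
  obtain ⟨M, hM⟩ := hSb
  have hbim : BddAbove ((fun r : ℝ => c * r) '' S) := by
    refine ⟨c * M, ?_⟩
    rintro _ ⟨r, hr, rfl⟩
    exact mul_le_mul_of_nonneg_left (hM hr) hc.le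
  apply le_antisymm
  · apply csSup_le (hSne.image _)
    rintro _ ⟨r, hr, rfl⟩
    exact mul_le_mul_of_nonneg_left (le_csSup ⟨M, hM⟩ hr) hc.le
  · have h1 : sSup S ≤ c⁻¹ * sSup ((fun r : ℝ => c * r) '' S) := by
      apply csSup_le hSne
      intro r hr
      have h2 : c * r ≤ sSup ((fun r : ℝ => c * r) '' S) :=
        le_csSup hbim (Set.mem_image_of_mem _ hr)
      rw [le_inv_mul_iff₀ hc]
      linarith
    calc c * sSup S ≤ c * (c⁻¹ * sSup ((fun r : ℝ => c * r) '' S)) :=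
          mul_le_mul_of_nonneg_left h1 hc.le
      _ = sSup ((fun r : ℝ => c * r) '' S) := by field_simp

lemma suppFn_homog1 (hK : IsCompact K) (hne : K.Nonempty) : IsHomog1 (suppFn K) :=
  fun c hc x => suppFn_smul hK hne hc x

lemma suppFn_even (hsym : ∀ x ∈ K, -x ∈ K) (x : Eucl n) :
    suppFn K (-x) = suppFn K x := by
  unfold suppFn
  congr 1
  ext r
  constructor
  · rintro ⟨y, hy, rfl⟩
    exact ⟨-y, hsym y hy, by simp⟩
  · rintro ⟨y, hy, rfl⟩
    refine ⟨-y, hsym y hy, by simp⟩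


end SuppFn

lemma contDiffOn_norm' : ContDiffOn ℝ 2 (fun z : Eucl n => ‖z‖) ({(0:Eucl n)}ᶜ) :=
  fun z hz => (contDiffAt_norm (𝕜 := ℝ) (by simpa using hz)).contDiffWithinAt

/-- pointwise bounds from the C² norm. -/
lemma pointwise_C2_bound {f : Eucl n → ℝ} (hf : ContDiffOn ℝ 2 f ({(0:Eucl n)}ᶜ))
    {η : ℝ} (hη : sphC2Norm f ≤ η) {x : Eucl n} (hx : ‖x‖ = 1) :
    |f x| ≤ η ∧ ‖fderiv ℝ f x‖ ≤ η ∧ ‖fderiv ℝ (fderiv ℝ f) x‖ ≤ η := by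
  have hso : IsOpen ({(0 : Eucl n)}ᶜ) := isOpen_compl_singleton
  have hsub : sphere (0 : Eucl n) 1 ⊆ ({(0:Eucl n)}ᶜ) := by
    intro z hz
    simp only [mem_sphere_iff_norm, sub_zero] at hz
    simp [show z ≠ 0 from fun h => by simp [h] at hz]
  have hc1 : ContinuousOn (fun z : Eucl n => |f z|) ({(0:Eucl n)}ᶜ) :=
    (hf.continuousOn).abs
  have hc2 : ContinuousOn (fun z : Eucl n => ‖fderiv ℝ f z‖) ({(0:Eucl n)}ᶜ) :=
    (hf.continuousOn_fderiv_of_isOpen hso (by norm_num)).norm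
  have hf' : ContDiffOn ℝ 1 (fderiv ℝ f) ({(0:Eucl n)}ᶜ) :=
    hf.fderiv_of_isOpen hso (by norm_num)
  have hc3 : ContinuousOn (fun z : Eucl n => ‖fderiv ℝ (fderiv ℝ f) z‖) ({(0:Eucl n)}ᶜ) :=
    (hf'.continuousOn_fderiv_of_isOpen hso (by norm_num)).norm
  have hcont : ContinuousOn
      (fun z : Eucl n => |f z| + ‖fderiv ℝ f z‖ + ‖fderiv ℝ (fderiv ℝ f) z‖)
      (sphere (0:Eucl n) 1) :=
    (((hc1.add hc2).add hc3)).mono hsub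
  have hcomp : IsCompact ((fun z : Eucl n =>
      |f z| + ‖fderiv ℝ f z‖ + ‖fderiv ℝ (fderiv ℝ f) z‖) '' sphere (0:Eucl n) 1) :=
    (isCompact_sphere (0 : Eucl n) 1).image_of_continuousOn hcont
  have hbdd := hcomp.bddAbove
  have hmem : |f x| + ‖fderiv ℝ f x‖ + ‖fderiv ℝ (fderiv ℝ f) x‖ ≤ sphC2Norm f :=
    le_csSup hbdd (Set.mem_image_of_mem _ (by simpa [mem_sphere_iff_norm] using hx))
  have h1 : (0:ℝ) ≤ |f x| := abs_nonneg _
  have h2 : (0:ℝ) ≤ ‖fderiv ℝ f x‖ := norm_nonneg _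
  have h3 : (0:ℝ) ≤ ‖fderiv ℝ (fderiv ℝ f) x‖ := by positivity
  refine ⟨by linarith, by linarith, by linarith⟩


lemma convex_combo_pos {t A B : ℝ} (ht0 : 0 ≤ t) (ht1 : t ≤ 1) (hA : 0 < A) (hB : 0 < B) :
    0 < (1-t)*A + t*B := by
  rcases le_or_gt t (1/2) with h | h
  · nlinarith
  · nlinarith

set_option maxHeartbeats 2000000 in
lemma hess_lower {p t b b' b'' ν : ℝ} (hp0 : 0 < p) (hp1 : p < 1) (ht0 : 0 ≤ t) (ht1 : t ≤ 1)
    (hν : 0 ≤ ν) (hb : |b - 1| ≤ 1/10) (hb' : |b'| ≤ ν/10) (hb'' : (9/10)*ν^2 ≤ b'') :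
    (1/2)*((1-t)+t*b^p)^(1/p-1)*ν^2
      ≤ (1/p)*(1/p-1)*((1-t)+t*b^p)^(1/p-2)*(t*p*b^(p-1)*b')^2
        + (1/p)*((1-t)+t*b^p)^(1/p-1)
          * ((1-t)*p*ν^2 + t*p*((p-1)*b^(p-2)*b'^2 + b^(p-1)*b'')) := by
  obtain ⟨hbl, hbr⟩ := abs_le.mp hb
  obtain ⟨hb'l, hb'r⟩ := abs_le.mp hb'
  have hb9 : (9/10 : ℝ) ≤ b := by linarith
  have hb11 : b ≤ 11/10 := by linarith
  have hbpos : (0:ℝ) < b := by linarith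
  have hW : (0:ℝ) < (1-t)+t*b^p := by
    have := convex_combo_pos ht0 ht1 (one_pos) (Real.rpow_pos_of_pos hbpos p)
    linarith [this]
  set W := (1-t)+t*b^p with hWdef
  have hX : (0:ℝ) < W ^ (1/p-1) := Real.rpow_pos_of_pos hW _
  have hX2 : (0:ℝ) ≤ W ^ (1/p-2) := (Real.rpow_pos_of_pos hW _).le
  have hip : (1:ℝ) ≤ 1/p := by rw [le_div_iff₀ hp0]; linarith
  -- k1 : 10/11 ≤ b^(p-1)
  have k1a : ((11/10:ℝ)) ^ (p-1) ≤ b ^ (p-1) :=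
    Real.rpow_le_rpow_of_nonpos hbpos hb11 (by linarith)
  have k1b : ((11/10:ℝ)) ^ (-1:ℝ) ≤ ((11/10:ℝ)) ^ (p-1) :=
    Real.rpow_le_rpow_of_exponent_le (by norm_num) (by linarith)
  have k1c : ((11/10:ℝ)) ^ (-1:ℝ) = 10/11 := by
    rw [Real.rpow_neg_one]; norm_num
  have k1 : (10/11 : ℝ) ≤ b ^ (p-1) := by rw [k1c] at k1b; linarith
  -- k2 : b^(p-2) ≤ 2
  have k2a : b ^ (p-2) ≤ ((9/10:ℝ)) ^ (p-2) :=
    Real.rpow_le_rpow_of_nonpos (by norm_num) hb9 (by linarith)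
  have k2b : ((9/10:ℝ)) ^ (p-2) ≤ ((9/10:ℝ)) ^ (-2:ℝ) :=
    Real.rpow_le_rpow_of_exponent_ge (by norm_num) (by norm_num) (by linarith)
  have k2c : ((9/10:ℝ)) ^ (-2:ℝ) = 100/81 := by
    rw [show ((-2:ℝ)) = -(2:ℝ) by norm_num, Real.rpow_neg (by norm_num),
      show ((2:ℝ)) = ((2:ℕ):ℝ) by norm_num, Real.rpow_natCast]
    norm_num
  have k2 : b ^ (p-2) ≤ 2 := by rw [k2c] at k2b; linarith
  have hbp2nn : (0:ℝ) ≤ b ^ (p-2) := (Real.rpow_pos_of_pos hbpos _).le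
  have hbp1nn : (0:ℝ) ≤ b ^ (p-1) := (Real.rpow_pos_of_pos hbpos _).le
  -- bound on b'^2
  have hb'sq : b'^2 ≤ (ν/10)^2 := sq_le_sq' (by linarith) hb'r
  have hY : b^(p-2) * b'^2 ≤ 2 * (ν/10)^2 :=
    mul_le_mul k2 hb'sq (sq_nonneg _) (by norm_num)
  have hYnn : 0 ≤ b^(p-2) * b'^2 := mul_nonneg hbp2nn (sq_nonneg _)
  have e1 : -(2*(ν/10)^2) ≤ (p-1) * (b^(p-2) * b'^2) := by nlinarith
  have e2 : (10/11)*((9/10)*ν^2) ≤ b^(p-1) * b'' := by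
    have h1 : (0:ℝ) ≤ (9/10)*ν^2 := by positivity
    calc (10/11)*((9/10)*ν^2) ≤ b^(p-1) * ((9/10)*ν^2) :=
          mul_le_mul_of_nonneg_right k1 h1
      _ ≤ b^(p-1) * b'' := mul_le_mul_of_nonneg_left hb'' hbp1nn
  -- C ≥ ν²/2
  have hC : ν^2/2 ≤ (1-t)*ν^2 + t*((p-1)*(b^(p-2)*b'^2) + b^(p-1)*b'') := by
    have hin : ν^2/2 ≤ (p-1)*(b^(p-2)*b'^2) + b^(p-1)*b'' := by
      have hr : -(2*(ν/10)^2) = -(1/50)*ν^2 := by ring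
      rw [hr] at e1
      linarith [sq_nonneg ν]
    linarith [mul_le_mul_of_nonneg_left hin ht0,
      mul_nonneg (by linarith : (0:ℝ) ≤ 1 - t) (sq_nonneg ν)]
  -- first term nonneg
  have hT1 : 0 ≤ (1/p)*(1/p-1)*W^(1/p-2)*(t*p*b^(p-1)*b')^2 := by
    have h1 : (0:ℝ) ≤ 1/p := le_of_lt (div_pos one_pos hp0)
    have h2 : (0:ℝ) ≤ 1/p - 1 := by linarith
    have h3 : (0:ℝ) ≤ (t*p*b^(p-1)*b')^2 := sq_nonneg _
    have := mul_nonneg (mul_nonneg (mul_nonneg h1 h2) hX2) h3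
    linarith [this]
  -- second term
  have hmain : W^(1/p-1) * (ν^2/2)
      ≤ (1/p)*W^(1/p-1)*((1-t)*p*ν^2 + t*p*((p-1)*b^(p-2)*b'^2 + b^(p-1)*b'')) := by
    have hre : (1/p)*W^(1/p-1)*((1-t)*p*ν^2 + t*p*((p-1)*b^(p-2)*b'^2 + b^(p-1)*b''))
        = W^(1/p-1) * ((1-t)*ν^2 + t*((p-1)*(b^(p-2)*b'^2) + b^(p-1)*b'')) := by
      field_simp
    rw [hre]
    exact mul_le_mul_of_nonneg_left hC hX.le
  calc (1/2)*W^(1/p-1)*ν^2 = W^(1/p-1) * (ν^2/2) := by ring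
    _ ≤ (1/p)*W^(1/p-1)*((1-t)*p*ν^2 + t*p*((p-1)*b^(p-2)*b'^2 + b^(p-1)*b'')) := hmain
    _ ≤ _ := by linarith


lemma hasFDerivAt_qpow (r : ℝ) {y : Eucl n} (hy : y ≠ 0) :
    HasFDerivAt (fun z : Eucl n => ((‖z‖^2 : ℝ)) ^ r)
      ((2 * r * ((‖y‖^2:ℝ)) ^ (r-1)) • innerSL ℝ y) y := by
  have hq := (hasStrictFDerivAt_norm_sq y).hasFDerivAt
  have hne : (‖y‖^2 : ℝ) ≠ 0 := pow_ne_zero _ (norm_ne_zero_iff.mpr hy)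
  have hc := (Real.hasDerivAt_rpow_const (x := ‖y‖^2) (p := r)
    (Or.inl hne)).comp_hasFDerivAt y hq
  refine (show HasFDerivAt (fun z : Eucl n => ((‖z‖^2 : ℝ)) ^ r) _ y from hc).congr_fderiv ?_
  ext u
  simp [ContinuousLinearMap.smul_apply, smul_eq_mul]
  ring

lemma norm_rpow_q (z : Eucl n) (r : ℝ) : ((‖z‖^2 : ℝ)) ^ r = ‖z‖ ^ (2*r) := by
  rw [show ((‖z‖^2 : ℝ)) = ‖z‖ ^ ((2:ℕ):ℝ) by rw [Real.rpow_natCast],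
    ← Real.rpow_mul (norm_nonneg z)]
  norm_num

section main
variable (p t : ℝ) (h : Eucl n → ℝ)

/-- the candidate support function in `q`-form. -/
def wq : Eucl n → ℝ := fun z => (1-t) * ((‖z‖^2 : ℝ)) ^ (p/2) + t * (h z) ^ p
def gq : Eucl n → ℝ := fun z => (wq p t h z) ^ (1/p)
def cN : Eucl n → ℝ := fun z => (1-t) * p * ((‖z‖^2 : ℝ)) ^ (p/2-1)
def cH : Eucl n → ℝ := fun z => t * p * (h z) ^ (p-1)
def Dw : Eucl n → (Eucl n →L[ℝ] ℝ) := fun y => cN p t y • innerSL ℝ y + cH p t h y • fderiv ℝ h y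

variable {p t h}
variable (hp0 : 0 < p) (hp1 : p < 1) (ht0 : 0 ≤ t) (ht1 : t ≤ 1)
  (hh2 : ContDiffOn ℝ 2 h ({(0:Eucl n)}ᶜ)) (hhpos : ∀ z : Eucl n, z ≠ 0 → 0 < h z)

lemma gq_eq : (fun z : Eucl n => ((1-t) * ‖z‖ ^ p + t * (h z) ^ p) ^ (1/p)) = gq p t h := by
  funext z
  unfold gq wq
  rw [norm_rpow_q, show 2*(p/2) = p by ring]

include hp0 ht0 ht1 hhpos in
lemma wq_pos {y : Eucl n} (hy : y ≠ 0) : 0 < wq p t h y := by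
  have h1 : (0:ℝ) < ((‖y‖^2 : ℝ)) ^ (p/2) :=
    Real.rpow_pos_of_pos (pow_pos (norm_pos_iff.mpr hy) 2) _
  have h2 : (0:ℝ) < (h y) ^ p := Real.rpow_pos_of_pos (hhpos y hy) _
  exact convex_combo_pos ht0 ht1 h1 h2
  
include hh2 hhpos in
lemma hasFDerivAt_wq {y : Eucl n} (hy : y ≠ 0) :
    HasFDerivAt (wq p t h) (Dw p t h y) y := by
  have hso : IsOpen ({(0 : Eucl n)}ᶜ) := isOpen_compl_singleton
  have h1 : HasFDerivAt (fun z : Eucl n => (1-t) * ((‖z‖^2 : ℝ)) ^ (p/2))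
      ((1-t) • ((2 * (p/2) * ((‖y‖^2:ℝ)) ^ (p/2-1)) • innerSL ℝ y)) y :=
    (hasFDerivAt_qpow (p/2) hy).const_mul (1-t)
  have h2 : HasFDerivAt (fun z : Eucl n => t * (h z) ^ p)
      (t • ((p * (h y) ^ (p-1)) • fderiv ℝ h y)) y := by
    have hd := (diffAt_of_contDiffOn hso hy hh2).hasFDerivAt
    have := (Real.hasDerivAt_rpow_const (x := h y) (p := p)
      (Or.inl (hhpos y hy).ne')).comp_hasFDerivAt y hd
    exact this.const_mul t
  have hsum := h1.add h2
  refine (show HasFDerivAt (wq p t h) _ y from hsum).congr_fderiv ?_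
  unfold Dw cN cH
  ext u
  simp [ContinuousLinearMap.add_apply, ContinuousLinearMap.smul_apply, smul_eq_mul]
  ring

include hp0 ht0 ht1 hh2 hhpos in
lemma hasFDerivAt_gq {y : Eucl n} (hy : y ≠ 0) :
    HasFDerivAt (gq p t h)
      (((1/p) * (wq p t h y) ^ (1/p-1)) • Dw p t h y) y := by
  have hw := hasFDerivAt_wq (p := p) (t := t) hh2 hhpos hy
  have hwpos := wq_pos hp0 ht0 ht1 hhpos hy
  have := (Real.hasDerivAt_rpow_const (x := wq p t h y) (p := 1/p)
    (Or.inl hwpos.ne')).comp_hasFDerivAt y hw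
  exact this

include hp0 ht0 ht1 hh2 hhpos in
lemma fderiv_gq_apply {y : Eucl n} (hy : y ≠ 0) (v : Eucl n) :
    fderiv ℝ (gq p t h) y v
      = (1/p) * (wq p t h y) ^ (1/p-1) * (cN p t y * ⟪v,y⟫ + cH p t h y * fderiv ℝ h y v) := by
  rw [(hasFDerivAt_gq hp0 ht0 ht1 hh2 hhpos hy).fderiv]
  unfold Dw
  rw [ContinuousLinearMap.smul_apply, ContinuousLinearMap.add_apply,
    ContinuousLinearMap.smul_apply, ContinuousLinearMap.smul_apply, innerSL_apply_apply,
    real_inner_comm]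
  simp only [smul_eq_mul]


include hp0 ht0 ht1 hh2 hhpos in
lemma contDiffOn_gq : ContDiffOn ℝ 2 (gq p t h) ({(0:Eucl n)}ᶜ) := by
  have hso : IsOpen ({(0 : Eucl n)}ᶜ) := isOpen_compl_singleton
  intro z hz
  have hz' : z ≠ 0 := by simpa using hz
  have hqne : (‖z‖^2 : ℝ) ≠ 0 := pow_ne_zero _ (norm_ne_zero_iff.mpr hz')
  have hqc : ContDiffAt ℝ 2 (fun z : Eucl n => (‖z‖^2 : ℝ)) z :=
    (contDiff_norm_sq ℝ).contDiffAt
  have c1 : ContDiffAt ℝ 2 (fun z : Eucl n => ((‖z‖^2:ℝ)) ^ (p/2)) z :=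
    by have := (Real.contDiffAt_rpow_const_of_ne (p := p/2) hqne).comp z hqc; exact this
  have c2 : ContDiffAt ℝ 2 (fun z : Eucl n => (h z) ^ p) z :=
    (Real.contDiffAt_rpow_const_of_ne (hhpos z hz').ne').comp z
      ((hh2 z hz).contDiffAt (hso.mem_nhds hz))
  have cw : ContDiffAt ℝ 2 (wq p t h) z :=
    (contDiffAt_const.mul c1).add (contDiffAt_const.mul c2)
  have hwne : wq p t h z ≠ 0 := (wq_pos hp0 ht0 ht1 hhpos hz').ne'
  exact ((Real.contDiffAt_rpow_const_of_ne hwne).comp z cw).contDiffWithinAt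

include hp0 hp1 ht0 ht1 hh2 hhpos in
lemma hess2_gq_formula {x v : Eucl n} (hx : ‖x‖ = 1) (hv : ⟪x,v⟫ = 0) :
    hess2 (gq p t h) x v v
      = (1/p)*(1/p-1)*((1-t) + t*(h x)^p)^(1/p-2) * (t*p*(h x)^(p-1) * fderiv ℝ h x v)^2
        + (1/p)*((1-t) + t*(h x)^p)^(1/p-1)
          * ((1-t)*p*‖v‖^2
             + t*p*((p-1)*(h x)^(p-2)*(fderiv ℝ h x v)^2 + (h x)^(p-1)*hess2 h x v v)) := by
  have hso : IsOpen ({(0 : Eucl n)}ᶜ) := isOpen_compl_singleton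
  have hx0 : x ≠ 0 := fun hc => by simp [hc] at hx
  have hx0' : x ∈ ({(0:Eucl n)}ᶜ : Set (Eucl n)) := by simpa using hx0
  have hq1 : (‖x‖^2 : ℝ) = 1 := by rw [hx]; norm_num
  have hb : 0 < h x := hhpos x hx0
  have hwx := wq_pos (y := x) hp0 ht0 ht1 hhpos hx0
  have key : hess2 (gq p t h) x v v = fderiv ℝ (fun z => fderiv ℝ (gq p t h) z v) x v :=
    (fderiv_fderiv_apply hso hx0' (contDiffOn_gq hp0 ht0 ht1 hh2 hhpos) v v).symm
  have hev : (fun z => fderiv ℝ (gq p t h) z v) =ᶠ[𝓝 x]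
      (fun z => (1/p) * (wq p t h z)^(1/p-1) * (cN p t z * ⟪v,z⟫ + cH p t h z * fderiv ℝ h z v)) := by
    filter_upwards [hso.mem_nhds hx0'] with z hz
    exact fderiv_gq_apply hp0 ht0 ht1 hh2 hhpos (by simpa using hz) v
  rw [key, hev.fderiv_eq]
  -- build HasFDerivAt of the explicit formula
  have hS : HasFDerivAt (fun z : Eucl n => (1/p) * (wq p t h z)^(1/p-1))
      ((1/p) • (((1/p-1) * (wq p t h x) ^ ((1/p-1)-1)) • Dw p t h x)) x :=
    ((Real.hasDerivAt_rpow_const (x := wq p t h x) (p := 1/p-1)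
      (Or.inl hwx.ne')).comp_hasFDerivAt x (hasFDerivAt_wq (p := p) (t := t) hh2 hhpos hx0)).const_mul (1/p)
  have hN : HasFDerivAt (fun z : Eucl n => (1-t) * p * ((‖z‖^2:ℝ)) ^ (p/2-1))
      (((1-t)*p) • ((2 * (p/2-1) * ((‖x‖^2:ℝ)) ^ ((p/2-1)-1)) • innerSL ℝ x)) x :=
    (hasFDerivAt_qpow (p/2-1) hx0).const_mul ((1-t)*p)
  have hI : HasFDerivAt (fun z : Eucl n => ⟪v,z⟫) (innerSL ℝ v) x :=
    (innerSL ℝ v).hasFDerivAt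
  have hdh : HasFDerivAt h (fderiv ℝ h x) x := (diffAt_of_contDiffOn hso hx0' hh2).hasFDerivAt
  have hH : HasFDerivAt (fun z : Eucl n => t * p * (h z)^(p-1))
      ((t*p) • (((p-1) * (h x) ^ ((p-1)-1)) • fderiv ℝ h x)) x :=
    ((Real.hasDerivAt_rpow_const (x := h x) (p := p-1)
      (Or.inl hb.ne')).comp_hasFDerivAt x hdh).const_mul (t*p)
  have hfv : HasFDerivAt (fun z : Eucl n => fderiv ℝ h z v)
      ((ContinuousLinearMap.apply ℝ ℝ v).comp (fderiv ℝ (fderiv ℝ h) x)) x :=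
    hasFDerivAt_fderiv_apply hso hx0' hh2 v
  have hT := (hN.mul hI).add (hH.mul hfv)
  have hP := hS.mul hT
  unfold cN cH
  rw [(show HasFDerivAt (fun z : Eucl n => 1/p * wq p t h z ^ (1/p-1) *
      ((1-t)*p*((‖z‖^2:ℝ))^(p/2-1) * ⟪v,z⟫ + t*p*(h z)^(p-1) * fderiv ℝ h z v)) _ x from hP).fderiv]
  have hvx : ⟪v,x⟫ = 0 := by rw [real_inner_comm]; exact hv
  have hvv : ⟪v,v⟫ = ‖v‖^2 := real_inner_self_eq_norm_sq v
  have hwxe : wq p t h x = (1-t) + t*(h x)^p := by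
    unfold wq; rw [hq1, Real.one_rpow]; ring
  unfold Dw cN cH hess2
  simp only [ContinuousLinearMap.add_apply, ContinuousLinearMap.smul_apply, smul_eq_mul,
    innerSL_apply_apply, Pi.mul_apply, Pi.add_apply, ContinuousLinearMap.comp_apply, ContinuousLinearMap.apply_apply,
    hq1, Real.one_rpow, hv, hvx, hvv, hwxe]
  rw [show ((1/p-1)-1 : ℝ) = 1/p-2 by ring, show ((p-1)-1 : ℝ) = p-2 by ring]
  ring


include ht0 ht1 in
lemma wq_nonneg (hhnn : ∀ z : Eucl n, 0 ≤ h z) (z : Eucl n) : 0 ≤ wq p t h z := by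
  unfold wq
  have h1 : (0:ℝ) ≤ ((‖z‖^2:ℝ)) ^ (p/2) := Real.rpow_nonneg (by positivity) _
  have h2 : (0:ℝ) ≤ (h z)^p := Real.rpow_nonneg (hhnn z) _
  nlinarith

include ht0 ht1 in
lemma gq_nonneg (hhnn : ∀ z : Eucl n, 0 ≤ h z) (z : Eucl n) : 0 ≤ gq p t h z :=
  Real.rpow_nonneg (wq_nonneg ht0 ht1 hhnn z) _

include hp0 in
lemma gq_zero (hh1 : IsHomog1 h) : gq p t h 0 = 0 := by
  unfold gq wq
  rw [homog1_zero hh1, norm_zero, show ((0:ℝ)^2) = 0 by norm_num,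
    Real.zero_rpow (by positivity : (p/2 : ℝ) ≠ 0), Real.zero_rpow hp0.ne',
    mul_zero, mul_zero, add_zero, Real.zero_rpow (one_div_ne_zero hp0.ne')]

include hp0 ht0 ht1 in
lemma gq_homog (hh1 : IsHomog1 h) (hhnn : ∀ z : Eucl n, 0 ≤ h z) : IsHomog1 (gq p t h) := by
  intro c hc x
  rcases eq_or_ne x 0 with rfl | hx0
  · rw [smul_zero, gq_zero hp0 hh1, mul_zero]
  · have hq : (‖c • x‖^2 : ℝ) = c^2 * ‖x‖^2 := by
      rw [norm_smul]
      simp [abs_of_pos hc]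
      ring
    have e1 : ((‖c•x‖^2:ℝ)) ^ (p/2) = ((c^2:ℝ))^(p/2) * ((‖x‖^2:ℝ))^(p/2) := by
      rw [hq, Real.mul_rpow (by positivity) (by positivity)]
    have e2 : ((c^2:ℝ))^(p/2) = c ^ p := by
      rw [show ((c:ℝ)^2) = c ^ ((2:ℕ):ℝ) by rw [Real.rpow_natCast], ← Real.rpow_mul hc.le]
      congr 1
      push_cast
      ring
    have e3 : (h (c • x))^p = c^p * (h x)^p := by
      rw [hh1 c hc x, Real.mul_rpow hc.le (hhnn x)]
    have e4 : wq p t h (c • x) = c^p * wq p t h x := by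
      unfold wq
      rw [e1, e2, e3]
      ring
    show (wq p t h (c • x)) ^ (1/p) = c * (wq p t h x) ^ (1/p)
    rw [e4, Real.mul_rpow (Real.rpow_nonneg hc.le _) (wq_nonneg ht0 ht1 hhnn x),
      ← Real.rpow_mul hc.le, mul_one_div_cancel hp0.ne', Real.rpow_one]

lemma gq_even (heven : ∀ z : Eucl n, h (-z) = h z) (z : Eucl n) :
    gq p t h (-z) = gq p t h z := by
  unfold gq wq
  rw [norm_neg, heven]

include hp0 in
lemma norm_eq_gq0 : (fun z : Eucl n => ‖z‖) = gq p 0 h := by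
  funext z
  unfold gq wq
  rw [show (1-(0:ℝ)) = 1 by norm_num, one_mul, zero_mul, add_zero, norm_rpow_q,
    show 2*(p/2) = p by ring, ← Real.rpow_mul (norm_nonneg z), mul_one_div_cancel hp0.ne',
    Real.rpow_one]

end main

lemma convexOn_univ_of_psd {G : Eucl n → ℝ} (hG2 : ContDiffOn ℝ 2 G ({(0:Eucl n)}ᶜ))
    (hG1 : IsHomog1 G) (hGeven : ∀ z, G (-z) = G z) (hGnn : ∀ z, 0 ≤ G z)
    (hpsd : ∀ y : Eucl n, y ≠ 0 → ∀ u, 0 ≤ hess2 G y u u) :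
    ConvexOn ℝ Set.univ G := by
  have hso : IsOpen ({(0 : Eucl n)}ᶜ) := isOpen_compl_singleton
  refine ⟨convex_univ, ?_⟩
  intro x _ y _ a b ha hb hab
  simp only [smul_eq_mul]
  rcases eq_or_lt_of_le ha with rfl | ha'
  · have hb1 : b = 1 := by linarith
    subst hb1; simp
  rcases eq_or_lt_of_le hb with rfl | hb'
  · have ha1 : a = 1 := by linarith
    subst ha1; simp
  by_cases hseg : ∃ s : ℝ, s ∈ Set.Icc (0:ℝ) 1 ∧ x + s • (y - x) = 0
  · obtain ⟨s₀, hs₀, hzero⟩ := hseg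
    rcases eq_or_lt_of_le hs₀.1 with rfl | hs0
    · -- s₀ = 0 : x = 0
      have hx0 : x = 0 := by simpa using hzero
      subst hx0
      rw [homog1_zero hG1, smul_zero, zero_add, hG1 b hb' y]
      nlinarith [hGnn y]
    rcases eq_or_lt_of_le hs₀.2 with he | hs1
    · -- s₀ = 1 : y = 0
      have hy0 : y = 0 := by
        have : x + s₀ • (y - x) = y := by rw [he]; module
        rw [this] at hzero; exact hzero
      subst hy0
      rw [homog1_zero hG1, smul_zero, add_zero, hG1 a ha' x]
      nlinarith [hGnn x]
    · -- 0 < s₀ < 1, y = -μ • x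
      set μ := (1-s₀)/s₀ with hμdef
      have hμ : 0 < μ := div_pos (by linarith) hs0
      have hy_eq : y = (-μ) • x := by
        have h1 : s₀ • y = -((1-s₀) • x) := by
          have : (1-s₀) • x + s₀ • y = 0 := by
            rw [← hzero]; module
          linear_combination (norm := module) this
        have h2 : y = (s₀⁻¹ * -(1-s₀)) • x := by
          rw [mul_smul, show (-(1-s₀)) • x = -((1-s₀) • x) from neg_smul _ _, ← h1,
            smul_smul, inv_mul_cancel₀ hs0.ne', one_smul]
        rw [h2, hμdef]
        congr 1
        field_simp
      have hGy : G y = μ * G x := by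
        rw [hy_eq, show (-μ) • x = μ • (-x) by module, hG1 μ hμ (-x), hGeven x]
      have hcomb : a • x + b • y = (a - b*μ) • x := by
        rw [hy_eq]; module
      rw [hcomb, hGy]
      rcases lt_trichotomy (a - b*μ) 0 with hc | hc | hc
      · have : (a - b*μ) • x = (b*μ - a) • (-x) := by module
        rw [this, hG1 _ (by linarith) (-x), hGeven x]
        nlinarith [hGnn x]
      · rw [hc, zero_smul, homog1_zero hG1]
        nlinarith [hGnn x]
      · rw [hG1 _ hc x]
        nlinarith [hGnn x, mul_nonneg (mul_nonneg hb hμ.le) (hGnn x)]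
  · -- segment avoids 0
    push_neg at hseg
    have hne : ∀ s : ℝ, s ∈ Set.Icc (0:ℝ) 1 → x + s • (y - x) ≠ 0 := fun s hs => hseg s hs
    set d := y - x with hd
    set φ : ℝ → ℝ := fun s => G (x + s • d) with hφ
    have hlc : Continuous (fun s : ℝ => x + s • d) :=
      continuous_const.add (continuous_id.smul continuous_const)
    have hmaps : Set.MapsTo (fun s : ℝ => x + s • d) (Set.Icc 0 1) ({(0:Eucl n)}ᶜ) := by
      intro s hs; simpa using hne s hs
    have hcont : ContinuousOn φ (Set.Icc 0 1) :=
      hG2.continuousOn.comp hlc.continuousOn hmaps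
    have hconv : ConvexOn ℝ (Set.Icc (0:ℝ) 1) φ := by
      apply convexOn_of_hasDerivWithinAt2_nonneg (f' := fun s => fderiv ℝ G (x + s • d) d)
        (f'' := fun s => hess2 G (x + s • d) d d) (convex_Icc 0 1) hcont
      · intro s hs
        rw [interior_Icc] at hs
        have hmem : x + s • d ≠ 0 := hne s ⟨hs.1.le, hs.2.le⟩
        exact (hasDerivAt_line (diffAt_of_contDiffOn hso (by simpa using hmem) hG2)
          x d rfl).hasDerivWithinAt
      · intro s hs
        rw [interior_Icc] at hs
        have hmem : x + s • d ≠ 0 := hne s ⟨hs.1.le, hs.2.le⟩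
        exact (hasDerivAt_line_fderiv hso hG2 x d d rfl (by simpa using hmem)).hasDerivWithinAt
      · intro s hs
        rw [interior_Icc] at hs
        exact hpsd _ (hne s ⟨hs.1.le, hs.2.le⟩) d
    have key := hconv.2 (Set.left_mem_Icc.mpr zero_le_one) (Set.right_mem_Icc.mpr zero_le_one)
      ha hb hab
    simp only [smul_eq_mul, mul_zero, mul_one, zero_add] at key
    have e0 : φ 0 = G x := by simp [hφ]
    have e1 : φ 1 = G y := by simp [hφ, hd]
    have eb : φ b = G (a • x + b • y) := by
      have : x + b • d = a • x + b • y := by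
        rw [hd, show a = 1 - b by linarith]; module
      simp [hφ, this]
    rw [e0, e1, eb] at key
    exact key

lemma gradient_ineq {G : Eucl n → ℝ} (hG2 : ContDiffOn ℝ 2 G ({(0:Eucl n)}ᶜ))
    (hconv : ConvexOn ℝ Set.univ G) {x : Eucl n} (hx : x ≠ 0) (y : Eucl n) :
    fderiv ℝ G x y - fderiv ℝ G x x ≤ G y - G x := by
  have hso : IsOpen ({(0 : Eucl n)}ᶜ) := isOpen_compl_singleton
  set φ : ℝ → ℝ := fun s => G (x + s • (y - x)) with hφ
  have hd : HasDerivAt φ (fderiv ℝ G x (y - x)) 0 :=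
    hasDerivAt_line (diffAt_of_contDiffOn hso (by simpa using hx) hG2) x (y - x) (by simp)
  have htend : Tendsto (slope φ 0) (𝓝[>] (0:ℝ)) (𝓝 (fderiv ℝ G x (y - x))) :=
    (hasDerivAt_iff_tendsto_slope.mp hd).mono_left
      (nhdsWithin_mono 0 (fun s hs => ne_of_gt hs))
  have hbound : ∀ᶠ s in 𝓝[>] (0:ℝ), slope φ 0 s ≤ G y - G x := by
    filter_upwards [Ioo_mem_nhdsGT zero_lt_one] with s hs
    have hcs : φ s ≤ (1-s) * G x + s * G y := by
      have := hconv.2 (Set.mem_univ x) (Set.mem_univ y)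
        (by linarith [hs.1, hs.2] : (0:ℝ) ≤ 1 - s) hs.1.le (by ring)
      simp only [smul_eq_mul] at this
      have harg : (1-s) • x + s • y = x + s • (y - x) := by module
      rw [harg] at this
      exact this
    have hφ0 : φ 0 = G x := by simp [hφ]
    rw [slope_def_field, hφ0, sub_zero, div_le_iff₀ hs.1]
    ring_nf
    nlinarith [hs.1]
  have hle : fderiv ℝ G x (y - x) ≤ G y - G x := le_of_tendsto htend hbound
  rw [map_sub] at hle
  have heuler := hle
  linarith [hle]


end S15

set_option maxHeartbeats 1000000
/-- Lemma `non si voleva`: for `p ∈ (0,1)` and `K` origin-symmetric of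
class `C^{2,+}` close to the unit ball, `h_t = ((1-t) + t h_K^p)^{1/p}` is the support
function of an origin-symmetric convex body of class `C^{2,+}`, for every `t ∈ [0,1]`.
(The function below is the `1`-homogeneous extension of `h_t`.) -/
theorem statement15 (n : ℕ) (hn : 2 ≤ n) (p : ℝ) (hp : p ∈ Set.Ioo (0 : ℝ) 1) :
    ∃ η : ℝ, 0 < η ∧
      ∀ K : Set (Eucl n), IsC2PlusBody K → (0 : Eucl n) ∈ interior K →
        (∀ x ∈ K, -x ∈ K) →
        sphC2Norm (fun x => ‖x‖ - suppFn K x) ≤ η →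
        ∀ t ∈ Set.Icc (0 : ℝ) 1,
          ∃ L : Set (Eucl n), IsC2PlusBody L ∧ (∀ x ∈ L, -x ∈ L) ∧
            ∀ x : Eucl n,
              suppFn L x = ((1 - t) * ‖x‖ ^ p + t * suppFn K x ^ p) ^ (1 / p) := by
  classical
  obtain ⟨hp0, hp1⟩ := hp
  refine ⟨1/10, by norm_num, ?_⟩
  intro K hK hK0 hKsym hKnorm t ht
  obtain ⟨⟨hKconv, hKcomp, hKne⟩, hKsupp⟩ := hK
  obtain ⟨hh1, hh2, hhQ⟩ := hKsupp
  obtain ⟨ht0, ht1⟩ := ht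
  have hso : IsOpen ({(0 : Eucl n)}ᶜ) := isOpen_compl_singleton
  set h : Eucl n → ℝ := suppFn K with hhdef
  set f : Eucl n → ℝ := fun x => ‖x‖ - suppFn K x with hfdef
  have hf2 : ContDiffOn ℝ 2 f ({(0:Eucl n)}ᶜ) := S15.contDiffOn_norm'.sub hh2
  have hbnd := fun (x : Eucl n) (hx : ‖x‖ = 1) => S15.pointwise_C2_bound hf2 hKnorm hx
  -- bound on h near 1 on the sphere
  have hb1 : ∀ x : Eucl n, ‖x‖ = 1 → |h x - 1| ≤ 1/10 := by
    intro x hx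
    have h1 := (hbnd x hx).1
    have h2 : f x = 1 - h x := by
      simp only [hfdef, hhdef]
      rw [hx]
    rw [abs_sub_comm]
    rw [h2] at h1
    exact h1
  have hhpos : ∀ z : Eucl n, z ≠ 0 → 0 < h z := by
    intro z hz
    have hnz : (0:ℝ) < ‖z‖ := norm_pos_iff.mpr hz
    have hzh : ‖(‖z‖⁻¹ • z)‖ = 1 := by
      rw [norm_smul, norm_inv, norm_norm, inv_mul_cancel₀ hnz.ne']
    have hb := abs_le.mp (hb1 _ hzh)
    have hrw : h z = ‖z‖ * h (‖z‖⁻¹ • z) := S15.homog1_norm hh1 z hz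
    nlinarith
  have hhnn : ∀ z : Eucl n, 0 ≤ h z := by
    intro z
    rcases eq_or_ne z 0 with rfl | hz
    · rw [S15.homog1_zero hh1]
    · exact (hhpos z hz).le
  have heven : ∀ z : Eucl n, h (-z) = h z := fun z => S15.suppFn_even hKsym z
  -- the candidate support function
  set G : Eucl n → ℝ := S15.gq p t h with hGdef
  have hgq_eq : (fun x : Eucl n => ((1-t) * ‖x‖ ^ p + t * h x ^ p) ^ (1/p)) = G :=
    S15.gq_eq
  -- facts about the norm function via gq with t = 0
  have hNC2 : ContDiffOn ℝ 2 (fun z : Eucl n => ‖z‖) ({(0:Eucl n)}ᶜ) := S15.contDiffOn_norm'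
  have hN1 : ∀ x : Eucl n, ‖x‖ = 1 → ∀ v, fderiv ℝ (fun z : Eucl n => ‖z‖) x v = ⟪v,x⟫ := by
    intro x hx v
    have hx0 : x ≠ 0 := fun hc => by simp [hc] at hx
    have hq1 : (‖x‖^2:ℝ) = 1 := by rw [hx]; norm_num
    rw [S15.norm_eq_gq0 (p := p) (h := h) hp0,
      S15.fderiv_gq_apply hp0 (le_refl 0) zero_le_one hh2 hhpos hx0 v]
    unfold S15.cN S15.cH S15.wq
    rw [hq1, Real.one_rpow]
    field_simp
    simp
  have hN2 : ∀ x : Eucl n, ‖x‖ = 1 → ∀ v, ⟪x,v⟫ = 0 →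
      hess2 (fun z : Eucl n => ‖z‖) x v v = ‖v‖^2 := by
    intro x hx v hv
    rw [S15.norm_eq_gq0 (p := p) (h := h) hp0,
      S15.hess2_gq_formula hp0 hp1 (le_refl 0) zero_le_one hh2 hhpos hx hv,
      show (1 - (0:ℝ) + 0 * (h x)^p) = 1 by ring, Real.one_rpow]
    field_simp
    simp
  -- tangential bounds on h
  have hb2 : ∀ x : Eucl n, ‖x‖ = 1 → ∀ v, ⟪x,v⟫ = 0 → |fderiv ℝ h x v| ≤ ‖v‖/10 := by
    intro x hx v hv
    have hx0 : x ≠ 0 := fun hc => by simp [hc] at hx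
    have hx0' : x ∈ ({(0:Eucl n)}ᶜ : Set (Eucl n)) := by simpa using hx0
    have hdh : DifferentiableAt ℝ h x := S15.diffAt_of_contDiffOn hso hx0' hh2
    have hdf : DifferentiableAt ℝ f x := S15.diffAt_of_contDiffOn hso hx0' hf2
    have hsum : (fun z : Eucl n => ‖z‖) = fun z => h z + f z := by
      funext z
      rw [hfdef, hhdef]
      ring
    have e : fderiv ℝ (fun z : Eucl n => ‖z‖) x v = fderiv ℝ h x v + fderiv ℝ f x v := by
      rw [hsum, fderiv_fun_add hdh hdf, ContinuousLinearMap.add_apply]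
    have e2 : fderiv ℝ h x v = -(fderiv ℝ f x v) := by
      have hNv := hN1 x hx v
      rw [e] at hNv
      have hvx : ⟪v,x⟫ = (0:ℝ) := by rw [real_inner_comm]; exact hv
      rw [hvx] at hNv
      linarith
    rw [e2, abs_neg]
    have hb := (hbnd x hx).2.1
    have hop := (fderiv ℝ f x).le_opNorm v
    have habs : |fderiv ℝ f x v| = ‖fderiv ℝ f x v‖ := (Real.norm_eq_abs _).symm
    rw [habs]
    nlinarith [norm_nonneg v, norm_nonneg (fderiv ℝ f x)]
  have hb3 : ∀ x : Eucl n, ‖x‖ = 1 → ∀ v, ⟪x,v⟫ = 0 →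
      (9/10)*‖v‖^2 ≤ hess2 h x v v := by
    intro x hx v hv
    have hx0 : x ≠ 0 := fun hc => by simp [hc] at hx
    have hx0' : x ∈ ({(0:Eucl n)}ᶜ : Set (Eucl n)) := by simpa using hx0
    have hsum : (fun z : Eucl n => ‖z‖) = fun z => h z + f z := by
      funext z
      rw [hfdef, hhdef]
      ring
    have eA : (fun z : Eucl n => fderiv ℝ (fun z : Eucl n => ‖z‖) z v) =ᶠ[𝓝 x]
        (fun z => fderiv ℝ h z v + fderiv ℝ f z v) := by
      filter_upwards [hso.mem_nhds hx0'] with z hz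
      rw [hsum, fderiv_fun_add (S15.diffAt_of_contDiffOn hso hz hh2)
        (S15.diffAt_of_contDiffOn hso hz hf2), ContinuousLinearMap.add_apply]
    have e3 : hess2 (fun z : Eucl n => ‖z‖) x v v = hess2 h x v v + hess2 f x v v := by
      rw [← S15.fderiv_fderiv_apply hso hx0' hNC2 v v, eA.fderiv_eq,
        fderiv_fun_add ((S15.hasFDerivAt_fderiv_apply hso hx0' hh2 v).differentiableAt)
          ((S15.hasFDerivAt_fderiv_apply hso hx0' hf2 v).differentiableAt),
        ContinuousLinearMap.add_apply,
        S15.fderiv_fderiv_apply hso hx0' hh2 v v, S15.fderiv_fderiv_apply hso hx0' hf2 v v]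
    have e4 : |hess2 f x v v| ≤ (1/10)*‖v‖^2 := by
      have hb := (hbnd x hx).2.2
      have hop1 := (fderiv ℝ (fderiv ℝ f) x).le_opNorm v
      have hop2 := ((fderiv ℝ (fderiv ℝ f) x) v).le_opNorm v
      have habs : |hess2 f x v v| = ‖(fderiv ℝ (fderiv ℝ f) x v) v‖ := (Real.norm_eq_abs _).symm
      rw [habs]
      nlinarith [norm_nonneg v, norm_nonneg (fderiv ℝ (fderiv ℝ f) x),
        norm_nonneg ((fderiv ℝ (fderiv ℝ f) x) v)]
    have e5 := hN2 x hx v hv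
    rw [e3] at e5
    have := abs_le.mp e4
    nlinarith
  -- main lower bound for the Hessian of G at unit tangent vectors
  have hkey : ∀ x : Eucl n, ‖x‖ = 1 → ∀ v, ⟪x,v⟫ = 0 →
      (1/2)*((1-t)+t*(h x)^p)^(1/p-1)*‖v‖^2 ≤ hess2 G x v v := by
    intro x hx v hv
    rw [hGdef, S15.hess2_gq_formula hp0 hp1 ht0 ht1 hh2 hhpos hx hv]
    exact S15.hess_lower hp0 hp1 ht0 ht1 (norm_nonneg v) (hb1 x hx) (hb2 x hx v hv)
      (hb3 x hx v hv)
  have hWpos : ∀ x : Eucl n, ‖x‖ = 1 → (0:ℝ) < ((1-t)+t*(h x)^p)^(1/p-1) := by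
    intro x hx
    have hx0 : x ≠ 0 := fun hc => by simp [hc] at hx
    have hbp : (0:ℝ) < (h x)^p := Real.rpow_pos_of_pos (hhpos x hx0) _
    have hW : (0:ℝ) < (1-t)+t*(h x)^p := by
      have := S15.convex_combo_pos ht0 ht1 one_pos hbp
      linarith
    exact Real.rpow_pos_of_pos hW _
  have hpos_unit : ∀ x : Eucl n, ‖x‖ = 1 → ∀ v : Eucl n, v ≠ 0 → ⟪x,v⟫ = 0 →
      0 < hess2 G x v v := by
    intro x hx v hv0 hv
    have h1 := hkey x hx v hv
    have h2 := hWpos x hx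
    have h3 : (0:ℝ) < ‖v‖^2 := pow_pos (norm_pos_iff.mpr hv0) 2
    nlinarith
  -- global facts about G
  have hG2 : ContDiffOn ℝ 2 G ({(0:Eucl n)}ᶜ) := S15.contDiffOn_gq hp0 ht0 ht1 hh2 hhpos
  have hG1 : IsHomog1 G := S15.gq_homog hp0 ht0 ht1 hh1 hhnn
  have hGeven : ∀ z, G (-z) = G z := fun z => S15.gq_even heven z
  have hG0 : G 0 = 0 := S15.homog1_zero hG1
  have hGnn : ∀ z, 0 ≤ G z := fun z => S15.gq_nonneg ht0 ht1 hhnn z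
  -- Hessian is positive semidefinite everywhere away from 0
  have hpsd : ∀ y : Eucl n, y ≠ 0 → ∀ u, 0 ≤ hess2 G y u u := by
    intro y hy u
    have hc : (0:ℝ) < ‖y‖ := norm_pos_iff.mpr hy
    obtain ⟨xh, hxh1, hyxh⟩ : ∃ xh : Eucl n, ‖xh‖ = 1 ∧ y = ‖y‖ • xh :=
      ⟨‖y‖⁻¹ • y, by rw [norm_smul, norm_inv, norm_norm, inv_mul_cancel₀ hc.ne'],
        by rw [smul_smul, mul_inv_cancel₀ hc.ne', one_smul]⟩
    have hxh0 : xh ≠ 0 := fun hc' => by simp [hc'] at hxh1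
    set a : ℝ := ⟪xh, u⟫ with hadef
    set v : Eucl n := u - a • xh with hvdef
    have hxx : ⟪xh, xh⟫ = (1:ℝ) := by
      rw [real_inner_self_eq_norm_sq, hxh1]; norm_num
    have hvt : ⟪xh, v⟫ = (0:ℝ) := by
      rw [hvdef, inner_sub_right, real_inner_smul_right, hxx, hadef]
      ring
    have hy' : y ∈ ({(0:Eucl n)}ᶜ : Set (Eucl n)) := by simpa using hy
    have hrad : ∀ w, hess2 G y y w = 0 := fun w => S15.hess2_radial hG1 hG2 hy w
    have hxhy : ‖y‖⁻¹ • y = xh := by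
      rw [hyxh, norm_smul, norm_norm, hxh1, mul_one, smul_smul, inv_mul_cancel₀ hc.ne',
        one_smul]
    have hH1 : ∀ w, fderiv ℝ (fderiv ℝ G) y xh w = 0 := by
      intro w
      have : fderiv ℝ (fderiv ℝ G) y xh = ‖y‖⁻¹ • (fderiv ℝ (fderiv ℝ G) y y) := by
        rw [← hxhy, ContinuousLinearMap.map_smul]
      rw [this]
      have := hrad w
      unfold hess2 at this
      rw [ContinuousLinearMap.smul_apply, this, smul_zero]
    have hsymm : ∀ w w', hess2 G y w w' = hess2 G y w' w :=
      fun w w' => S15.hess2_symm hso hy' hG2 w w'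
    have hH2 : fderiv ℝ (fderiv ℝ G) y v xh = 0 := by
      have := hsymm v xh
      unfold hess2 at this
      rw [this, hH1 v]
    have hu : u = a • xh + v := by rw [hvdef]; module
    have hHuu : hess2 G y u u = hess2 G y v v := by
      unfold hess2
      conv_lhs => rw [hu]
      simp only [_root_.map_add, ContinuousLinearMap.map_smul, ContinuousLinearMap.add_apply,
        ContinuousLinearMap.smul_apply, smul_eq_mul, hH1, hH2]
      ring
    rw [hHuu]
    rcases eq_or_ne v 0 with hv0 | hv0
    · rw [hv0]
      unfold hess2
      simp
    · have hscale := S15.hess2_scaling hG1 hG2 hc hxh0 v v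
      rw [← hyxh] at hscale
      rw [hscale]
      have h1 := hkey xh hxh1 v hvt
      have h2 := hWpos xh hxh1
      have h3 : (0:ℝ) ≤ ‖v‖^2 := by positivity
      have h4 : (0:ℝ) ≤ hess2 G xh v v := by nlinarith
      positivity
  have hconv : ConvexOn ℝ Set.univ G := S15.convexOn_univ_of_psd hG2 hG1 hGeven hGnn hpsd
  -- bound G on the sphere
  have hGle2 : ∀ y : Eucl n, ‖y‖ = 1 → G y ≤ 2 := by
    intro y hy
    have hy0 : y ≠ 0 := fun hc => by simp [hc] at hy
    have hq1 : (‖y‖^2:ℝ) = 1 := by rw [hy]; norm_num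
    have hhb := abs_le.mp (hb1 y hy)
    have hGy : G y = ((1-t) + t*(h y)^p)^(1/p) := by
      rw [hGdef]
      unfold S15.gq S15.wq
      rw [hq1, Real.one_rpow, mul_one]
    have h1 : (h y)^p ≤ ((11/10:ℝ))^p :=
      Real.rpow_le_rpow (hhnn y) (by linarith) hp0.le
    have h2 : (1:ℝ) ≤ ((11/10:ℝ))^p := Real.one_le_rpow (by norm_num) hp0.le
    have h3 : (1-t) + t*(h y)^p ≤ ((11/10:ℝ))^p := by nlinarith
    have h0 : (0:ℝ) ≤ (1-t) + t*(h y)^p := by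
      have : (0:ℝ) ≤ (h y)^p := Real.rpow_nonneg (hhnn y) _
      nlinarith
    have h4 : ((1-t) + t*(h y)^p)^(1/p) ≤ (((11/10:ℝ))^p)^(1/p) :=
      Real.rpow_le_rpow h0 h3 (by positivity)
    have h5 : (((11/10:ℝ))^p)^(1/p) = 11/10 := by
      rw [← Real.rpow_mul (by norm_num), mul_one_div_cancel hp0.ne', Real.rpow_one]
    rw [hGy]
    rw [h5] at h4
    linarith
  -- the body L
  set L : Set (Eucl n) := {z : Eucl n | ∀ y : Eucl n, ‖y‖ = 1 → ⟪z,y⟫ ≤ G y} with hLdef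
  have hL0 : (0:Eucl n) ∈ L := by
    intro y hy
    rw [inner_zero_left]
    exact hGnn y
  have hLne : L.Nonempty := ⟨0, hL0⟩
  have hLconv : Convex ℝ L := by
    intro z1 h1 z2 h2 a b ha hb hab
    intro y hy
    rw [inner_add_left, real_inner_smul_left, real_inner_smul_left]
    have e1 := mul_le_mul_of_nonneg_left (h1 y hy) ha
    have e2 := mul_le_mul_of_nonneg_left (h2 y hy) hb
    have e3 : a * G y + b * G y = G y := by rw [← add_mul, hab, one_mul]
    linarith
  have hLclosed : IsClosed L := by
    have : L = ⋂ (y : Eucl n) (_ : ‖y‖ = 1), {z : Eucl n | ⟪z,y⟫ ≤ G y} := by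
      ext z
      simp [hLdef, Set.mem_iInter]
    rw [this]
    exact isClosed_iInter fun y => isClosed_iInter fun hy =>
      isClosed_le (continuous_id.inner continuous_const) continuous_const
  have hLsub : L ⊆ closedBall (0 : Eucl n) 2 := by
    intro z hz
    rw [mem_closedBall, dist_zero_right]
    rcases eq_or_ne z 0 with rfl | hz0
    · simp
    · have hnz : (0:ℝ) < ‖z‖ := norm_pos_iff.mpr hz0
      have hzh : ‖(‖z‖⁻¹ • z)‖ = 1 := by
        rw [norm_smul, norm_inv, norm_norm, inv_mul_cancel₀ hnz.ne']
      have h1 := hz _ hzh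
      have h2 : ⟪z, ‖z‖⁻¹ • z⟫ = ‖z‖ := by
        rw [real_inner_smul_right, real_inner_self_eq_norm_sq]
        field_simp
      rw [h2] at h1
      linarith [hGle2 _ hzh]
  have hLcomp : IsCompact L :=
    (isCompact_closedBall (0:Eucl n) 2).of_isClosed_subset hLclosed hLsub
  have hLsym : ∀ z ∈ L, -z ∈ L := by
    intro z hz y hy
    have h1 := hz (-y) (by rw [norm_neg]; exact hy)
    rw [inner_neg_right] at h1
    rw [hGeven y] at h1
    rw [inner_neg_left]
    linarith
  -- support function of L equals G
  have hsupp : ∀ x : Eucl n, suppFn L x = G x := by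
    intro x
    rcases eq_or_ne x 0 with rfl | hx0
    · rw [S15.suppFn_zero hLne, hG0]
    · have hnx : (0:ℝ) < ‖x‖ := norm_pos_iff.mpr hx0
      obtain ⟨xh, hxh1, hxeq⟩ : ∃ xh : Eucl n, ‖xh‖ = 1 ∧ x = ‖x‖ • xh :=
        ⟨‖x‖⁻¹ • x, by rw [norm_smul, norm_inv, norm_norm, inv_mul_cancel₀ hnx.ne'],
          by rw [smul_smul, mul_inv_cancel₀ hnx.ne', one_smul]⟩
      have hxh0 : xh ≠ 0 := fun hc => by simp [hc] at hxh1
      have hGx : G x = ‖x‖ * G xh := by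
        rw [hxeq, hG1 ‖x‖ hnx xh, norm_smul, hxh1, norm_norm, mul_one]
      apply le_antisymm
      · apply csSup_le (hLne.image _)
        rintro _ ⟨z, hz, rfl⟩
        show ⟪x, z⟫ ≤ G x
        have h1 : ⟪z, xh⟫ ≤ G xh := hz xh hxh1
        have h2 : ⟪x, z⟫ = ‖x‖ * ⟪z, xh⟫ := by
          conv_lhs => rw [hxeq]
          rw [real_inner_smul_left, real_inner_comm xh z]
        rw [h2, hGx]
        exact mul_le_mul_of_nonneg_left h1 hnx.le
      · set z₀ : Eucl n := (InnerProductSpace.toDual ℝ (Eucl n)).symm (fderiv ℝ G xh)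
          with hz₀def
        have hz₀app : ∀ u : Eucl n, ⟪z₀, u⟫ = fderiv ℝ G xh u := by
          intro u
          rw [hz₀def]
          exact InnerProductSpace.toDual_symm_apply
        have heu : fderiv ℝ G xh xh = G xh := S15.euler hG1 hG2 hxh0
        have hz₀L : z₀ ∈ L := by
          intro y hy
          have hgi := S15.gradient_ineq hG2 hconv hxh0 y
          rw [hz₀app y]
          linarith
        have hval : ⟪x, z₀⟫ = G x := by
          have h3 : ⟪z₀, x⟫ = fderiv ℝ G xh x := hz₀app x
          have h4 : fderiv ℝ G xh x = ‖x‖ * G xh := by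
            conv_lhs => rw [hxeq]
            rw [ContinuousLinearMap.map_smul, heu, smul_eq_mul]
          rw [real_inner_comm, h3, h4, hGx]
        calc G x = ⟪x, z₀⟫ := hval.symm
          _ ≤ suppFn L x := le_csSup (S15.bddAbove_inner_image hLcomp x)
              ⟨z₀, hz₀L, rfl⟩
  refine ⟨L, ⟨⟨hLconv, hLcomp, hLne⟩, ?_⟩, hLsym, ?_⟩
  · rw [show suppFn L = G from funext hsupp]
    exact ⟨hG1, hG2, fun x hx v hv0 hvt => hpos_unit x hx v hv0 hvt⟩
  · intro x
    rw [hsupp x, hGdef, ← S15.gq_eq]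
end
end

section
/- Let n ≥ 3, k ∈ {2,…,n−1} with k ≤ n/2, and let K₀ = {x ∈ ℝⁿ : x_j = 0 for j = 1,…,n−k, |x_i| ≤ 1 for i = n−k+1,…,n} and K₁ = {x ∈ ℝⁿ : |x_i| ≤ 1 for i = 1,…,k, x_j = 0 for j = k+1,…,n} be two coordinate k-cubes of side 2. Then for every p ∈ (0,1), the body K_p := (1/2)·K₀ +_p (1/2)·K₁ satisfies V_k(K_p) ≤ binom(2k, k) · 2^{k − k/p}, while V_k(K₀) = V_k(K₁) = 2ᵏ. Consequently, for every p < k / log₂ binom(2k, k), one has V_k(K_p)^{p/k} < (1/2)V_k(K₀)^{p/k} + (1/2)V_k(K₁)^{p/k}, i.e. the p-Brunn-Minkowski inequality for V_k fails. -/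
open Metric MeasureTheory Filter
open scoped RealInnerProductSpace Pointwise Topology

noncomputable section

/-- The `k`-dimensional coordinate cube `K₀` of side length 2 spanned by the last `k`
coordinates of `ℝⁿ`. -/
def cubeK₀ (n k : ℕ) : Set (Eucl n) :=
  {x | (∀ j : Fin n, (j : ℕ) < n - k → x j = 0) ∧
       (∀ i : Fin n, n - k ≤ (i : ℕ) → |x i| ≤ 1)}

/-- The `k`-dimensional coordinate cube `K₁` of side length 2 spanned by the first `k`
coordinates of `ℝⁿ`. -/
def cubeK₁ (n k : ℕ) : Set (Eucl n) :=
  {x | (∀ i : Fin n, (i : ℕ) < k → |x i| ≤ 1) ∧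
       (∀ j : Fin n, k ≤ (j : ℕ) → x j = 0)}

open scoped ENNReal NNReal

namespace S17

/-! ### Geometry of boxes -/

/-- excess of `t` beyond the interval `[-b,b]`. -/
def exc (b t : ℝ) : ℝ := max (|t| - b) 0

lemma exc_nonneg (b t : ℝ) : 0 ≤ exc b t := le_max_right _ _

lemma exc_continuous (b : ℝ) : Continuous (exc b) :=
  (continuous_abs.sub continuous_const).max continuous_const

lemma exc_zero (t : ℝ) : exc 0 t = |t| := by simp [exc, abs_nonneg]

lemma exc_of_le {b t : ℝ} (h : |t| ≤ b) : exc b t = 0 := max_eq_right (by linarith)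

lemma exc_of_gt {b t : ℝ} (h : b < |t|) : exc b t = |t| - b := max_eq_left (by linarith)

/-- the coordinate box `∏ [-a i, a i]`. -/
def box (n : ℕ) (a : Fin n → ℝ) : Set (Eucl n) := {x | ∀ i, |x i| ≤ a i}

lemma box_mem_zero {n : ℕ} {a : Fin n → ℝ} (ha : ∀ i, 0 ≤ a i) : (0 : Eucl n) ∈ box n a := by
  intro i; simpa using ha i

/-- the clamp of `x` to the box -/
def clampB {n : ℕ} (a : Fin n → ℝ) (x : Eucl n) : Eucl n :=
  WithLp.toLp 2 (fun i => max (-(a i)) (min (a i) (x i)))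

lemma clampB_mem {n : ℕ} {a : Fin n → ℝ} (ha : ∀ i, 0 ≤ a i) (x : Eucl n) :
    clampB a x ∈ box n a := by
  intro i
  rw [abs_le]
  exact ⟨le_max_left _ _, max_le (by linarith [ha i]) (min_le_left _ _)⟩

lemma abs_sub_clampB {n : ℕ} {a : Fin n → ℝ} (ha : ∀ i, 0 ≤ a i) (x : Eucl n) (i : Fin n) :
    |x i - clampB a x i| = exc (a i) (x i) := by
  have h0 := ha i
  rcases le_or_gt (|x i|) (a i) with h | h
  · rw [exc_of_le h]
    rw [abs_le] at h
    have : clampB a x i = x i := by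
      simp only [clampB, PiLp.toLp_apply]
      rw [min_eq_right h.2, max_eq_right h.1]
    rw [this]; simp
  · rw [exc_of_gt h]
    rcases abs_cases (x i) with ⟨he, hs⟩ | ⟨he, hs⟩
    · have hx : a i < x i := by rw [he] at h; exact h
      have : clampB a x i = a i := by
        simp only [clampB, PiLp.toLp_apply]
        rw [min_eq_left hx.le, max_eq_right (by linarith)]
      rw [this, he, abs_of_nonneg (by linarith)]
    · have hx : x i < -(a i) := by rw [he] at h; linarith
      have : clampB a x i = -(a i) := by
        simp only [clampB, PiLp.toLp_apply]
        rw [min_eq_right (by linarith), max_eq_left (by linarith)]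
      rw [this, he, abs_of_nonpos (by linarith)]; ring

lemma dist_le_boxdist {n : ℕ} {a : Fin n → ℝ} (x : Eucl n)
    {y : Eucl n} (hy : y ∈ box n a) (i : Fin n) : exc (a i) (x i) ≤ |x i - y i| := by
  rcases le_or_gt (|x i|) (a i) with h | h
  · rw [exc_of_le h]; exact abs_nonneg _
  · rw [exc_of_gt h]
    have h1 : |y i| ≤ a i := hy i
    calc |x i| - a i ≤ |x i| - |y i| := by linarith
    _ ≤ |x i - y i| := abs_sub_abs_le_abs_sub _ _

/-- The closed `ε`-neighbourhood of a box. -/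
lemma cthickening_box {n : ℕ} {a : Fin n → ℝ} (ha : ∀ i, 0 ≤ a i) {ε : ℝ} (hε : 0 ≤ ε) :
    cthickening ε (box n a) = {x : Eucl n | ∑ i, exc (a i) (x i) ^ 2 ≤ ε ^ 2} := by
  have hne : (box n a).Nonempty := ⟨0, box_mem_zero ha⟩
  ext x
  have hdist : Metric.infDist x (box n a) = Real.sqrt (∑ i, exc (a i) (x i) ^ 2) := by
    apply le_antisymm
    · have h1 : Metric.infDist x (box n a) ≤ dist x (clampB a x) :=
        Metric.infDist_le_dist_of_mem (clampB_mem ha x)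
      refine h1.trans (le_of_eq ?_)
      rw [EuclideanSpace.dist_eq]
      congr 1
      refine Finset.sum_congr rfl fun i _ => ?_
      rw [Real.dist_eq, abs_sub_clampB ha x i]
    · by_contra hlt
      push_neg at hlt
      obtain ⟨y, hy, hdy⟩ := (Metric.infDist_lt_iff hne).1 hlt
      have h2 : Real.sqrt (∑ i, exc (a i) (x i) ^ 2) ≤ dist x y := by
        rw [EuclideanSpace.dist_eq]
        apply Real.sqrt_le_sqrt
        refine Finset.sum_le_sum fun i _ => ?_
        have := dist_le_boxdist x hy i
        have h0 := exc_nonneg (a i) (x i)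
        rw [Real.dist_eq]
        nlinarith [abs_nonneg (x i - y i)]
      linarith
  rw [Metric.mem_cthickening_iff,
    ENNReal.le_ofReal_iff_toReal_le (Metric.infEdist_ne_top hne) hε]
  change Metric.infDist x (box n a) ≤ ε ↔ _
  rw [hdist, Real.sqrt_le_iff]
  simp only [Set.mem_setOf_eq]
  exact ⟨fun h => h.2, fun h => ⟨hε, h⟩⟩

/-! ### Volume of sublevel sets in pi space -/

/-- volume of the sublevel set of the sum of squared excesses. -/
def WV (m : ℕ) (a : Fin m → ℝ) (c : ℝ) : ℝ≥0∞ :=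
  volume {x : Fin m → ℝ | ∑ i, exc (a i) (x i) ^ 2 ≤ c}

lemma WV_mono (m : ℕ) (a : Fin m → ℝ) : Monotone (WV m a) := by
  intro c d hcd
  apply measure_mono
  intro x hx
  exact le_trans hx hcd

lemma WV_measurable_comp (m : ℕ) (a : Fin m → ℝ) {g : ℝ → ℝ} (hg : Measurable g) :
    Measurable fun t => WV m a (g t) := (Monotone.measurable (WV_mono m a)).comp hg

lemma WV_succ (m : ℕ) (a : Fin (m + 1) → ℝ) (c : ℝ) :
    WV (m + 1) a c = ∫⁻ t : ℝ, WV m (a ∘ Fin.succ) (c - exc (a 0) t ^ 2) := by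
  classical
  set S' : Set (ℝ × (Fin m → ℝ)) :=
    {q | exc (a 0) q.1 ^ 2 + ∑ j, exc (a j.succ) (q.2 j) ^ 2 ≤ c} with hS'
  have hmeas : MeasurableSet S' := by
    have hcont : Continuous fun q : ℝ × (Fin m → ℝ) =>
        exc (a 0) q.1 ^ 2 + ∑ j, exc (a j.succ) (q.2 j) ^ 2 := by
      apply Continuous.add
      · exact ((exc_continuous (a 0)).comp continuous_fst).pow 2
      · apply continuous_finset_sum
        intro j _
        exact ((exc_continuous (a j.succ)).comp ((continuous_apply j).comp continuous_snd)).pow 2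
    exact (isClosed_le hcont continuous_const).measurableSet
  have MP := measurePreserving_piFinSuccAbove (fun _ : Fin (m + 1) => (volume : Measure ℝ)) 0
  have hpre : (⇑(MeasurableEquiv.piFinSuccAbove (fun _ : Fin (m + 1) => ℝ) 0)) ⁻¹' S' =
      {x : Fin (m + 1) → ℝ | ∑ i, exc (a i) (x i) ^ 2 ≤ c} := by
    ext x
    simp only [Set.mem_preimage, hS', Set.mem_setOf_eq, MeasurableEquiv.piFinSuccAbove_apply]
    rw [Fin.sum_univ_succ]
    simp [Fin.removeNth, Fin.succAbove, Fin.insertNth, Fin.tail]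
  have h1 : WV (m + 1) a c = ((volume : Measure ℝ).prod (volume : Measure (Fin m → ℝ))) S' := by
    rw [WV, ← hpre, volume_pi]
    have h2 : ((volume : Measure ℝ).prod (volume : Measure (Fin m → ℝ)))
        = ((volume : Measure ℝ).prod (Measure.pi fun _ : Fin m => volume)) := by
      rw [volume_pi]
    rw [h2]
    exact MP.measure_preimage hmeas.nullMeasurableSet
  rw [h1, Measure.prod_apply hmeas]
  congr 1
  ext t
  congr 1
  ext y
  simp only [Set.mem_preimage, hS', Set.mem_setOf_eq, WV, Function.comp]
  constructor <;> intro h <;> linarith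

/-! ### One-dimensional integrals -/

lemma lintegral_abs (f : ℝ → ℝ≥0∞) (hf : Measurable f) :
    ∫⁻ u : ℝ, f |u| = 2 * ∫⁻ u in Set.Ioi (0 : ℝ), f u := by
  have h1 : ∫⁻ u : ℝ, f |u| = (∫⁻ u in Set.Ioi (0:ℝ), f |u|) + ∫⁻ u in (Set.Ioi (0:ℝ))ᶜ, f |u| :=
    (lintegral_add_compl _ measurableSet_Ioi).symm
  have h2 : ∫⁻ u in Set.Ioi (0:ℝ), f |u| = ∫⁻ u in Set.Ioi (0:ℝ), f u := by
    refine setLIntegral_congr_fun measurableSet_Ioi ?_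
    intro u hu; show f |u| = f u; rw [abs_of_pos (show (0:ℝ) < u from hu)]
  have hc : (Set.Ioi (0:ℝ))ᶜ = Set.Iic (0:ℝ) := by ext t; simp
  have h3 : ∫⁻ u in (Set.Ioi (0:ℝ))ᶜ, f |u| = ∫⁻ u in Set.Ioi (0:ℝ), f u := by
    rw [hc]
    have hn := Measure.measurePreserving_neg (volume : Measure ℝ)
    have hpre : (Neg.neg : ℝ → ℝ) ⁻¹' Set.Iic (0:ℝ) = Set.Ici (0:ℝ) := by ext t; simp
    have habs : Measurable fun u : ℝ => f |u| := hf.comp measurable_abs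
    have hcomp := hn.setLIntegral_comp_preimage (s := Set.Iic (0:ℝ)) measurableSet_Iic habs
    rw [hpre] at hcomp
    rw [← hcomp, setLIntegral_congr (Ioi_ae_eq_Ici (a := (0:ℝ))).symm]
    refine setLIntegral_congr_fun measurableSet_Ioi ?_
    intro u hu
    show f |(-u)| = f u
    rw [abs_neg, abs_of_pos (show (0:ℝ) < u from hu)]
  rw [h1, h2, h3, two_mul]

lemma lintegral_exc {b : ℝ} (hb : 0 ≤ b) (f : ℝ → ℝ≥0∞) (hf : Measurable f) :
    ∫⁻ t : ℝ, f (exc b t) = ENNReal.ofReal (2 * b) * f 0 + ∫⁻ u : ℝ, f |u| := by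
  have h1 : ∫⁻ t : ℝ, f (exc b t) =
      (∫⁻ t in Set.Icc (-b) b, f (exc b t)) + ∫⁻ t in (Set.Icc (-b) b)ᶜ, f (exc b t) :=
    (lintegral_add_compl _ measurableSet_Icc).symm
  have hcompl : (Set.Icc (-b) b)ᶜ = Set.Iio (-b) ∪ Set.Ioi b := by
    ext t
    simp only [Set.mem_compl_iff, Set.mem_Icc, not_and_or, not_le, Set.mem_union, Set.mem_Iio,
      Set.mem_Ioi]
  have h2 : ∫⁻ t in Set.Icc (-b) b, f (exc b t) = ENNReal.ofReal (2 * b) * f 0 := by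
    rw [setLIntegral_congr_fun measurableSet_Icc (
      (fun t ht => by rw [exc_of_le (abs_le.2 ⟨ht.1, ht.2⟩)]))]
    rw [setLIntegral_const, Real.volume_Icc, mul_comm]
    congr 1; ring_nf
  have h3 : ∫⁻ t in Set.Ioi b, f (exc b t) = ∫⁻ u in Set.Ioi (0:ℝ), f u := by
    rw [setLIntegral_congr_fun measurableSet_Ioi (
      (fun t (ht : b < t) => by
        rw [exc_of_gt (by rw [abs_of_pos (lt_of_le_of_lt hb ht)]; exact ht),
          abs_of_pos (lt_of_le_of_lt hb ht)]))]
    have hmp := measurePreserving_add_right (volume : Measure ℝ) b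
    have hpre : (fun x : ℝ => x + b) ⁻¹' Set.Ioi b = Set.Ioi (0:ℝ) := by ext t; simp
    have hfs : Measurable fun t : ℝ => f (t - b) :=
      hf.comp (measurable_id.sub measurable_const)
    have hcomp := hmp.setLIntegral_comp_preimage (s := Set.Ioi b) measurableSet_Ioi hfs
    rw [hpre] at hcomp
    rw [← hcomp]
    congr 1; ext t; congr 1; ring
  have h4 : ∫⁻ t in Set.Iio (-b), f (exc b t) = ∫⁻ u in Set.Ioi (0:ℝ), f u := by
    rw [setLIntegral_congr_fun measurableSet_Iio (
      (fun t (ht : t < -b) => by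
        rw [exc_of_gt (by rw [abs_of_neg (by linarith)]; linarith),
          abs_of_neg (by linarith : t < 0)]))]
    have hmp : MeasurePreserving (fun u : ℝ => -u - b) volume volume := by
      have h5 : (fun u : ℝ => -u - b) = (fun x : ℝ => x + (-b)) ∘ (Neg.neg : ℝ → ℝ) := by
        ext u; simp [sub_eq_add_neg]
      rw [h5]
      exact (measurePreserving_add_right (volume : Measure ℝ) (-b)).comp
        (Measure.measurePreserving_neg _)
    have hpre : (fun u : ℝ => -u - b) ⁻¹' Set.Iio (-b) = Set.Ioi (0:ℝ) := by
      ext t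
      simp only [Set.mem_preimage, Set.mem_Iio, Set.mem_Ioi]
      constructor <;> intro h <;> linarith
    have hfs : Measurable fun t : ℝ => f (-t - b) :=
      hf.comp ((measurable_id.neg).sub measurable_const)
    have hcomp := hmp.setLIntegral_comp_preimage (s := Set.Iio (-b)) measurableSet_Iio hfs
    rw [hpre] at hcomp
    rw [← hcomp]
    congr 1; ext t; congr 1; ring
  have h5 : ∫⁻ t in (Set.Icc (-b) b)ᶜ, f (exc b t) =
      (∫⁻ t in Set.Iio (-b), f (exc b t)) + ∫⁻ t in Set.Ioi b, f (exc b t) := by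
    rw [hcompl, lintegral_union measurableSet_Ioi]
    rw [Set.disjoint_left]
    intro t (ht : t < -b) (ht' : b < t); linarith
  rw [h1, h2, h5, h3, h4, lintegral_abs f hf]
  congr 1
  rw [two_mul]

lemma WV_zero_eq (a : Fin 0 → ℝ) (c : ℝ) : WV 0 a c = WV 0 (fun _ => 0) c := by
  rw [WV, WV]
  congr 1

lemma sum_split (m : ℕ) {M : Type} [AddCommMonoid M] (g : Finset (Fin (m + 1)) → M) :
    ∑ T' : Finset (Fin (m + 1)), g T'
      = (∑ T : Finset (Fin m), g (T.map (Fin.succEmb m)))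
        + ∑ T : Finset (Fin m), g (insert 0 (T.map (Fin.succEmb m))) := by
  classical
  rw [← Finset.sum_filter_add_sum_filter_not Finset.univ
    (fun T' => (0 : Fin (m + 1)) ∉ T') g]
  have hmem : ∀ (T' : Finset (Fin (m + 1))) (j : Fin m),
      (∃ a : Fin m, a.succ ∈ T' ∧ a.succ = j.succ) ↔ j.succ ∈ T' :=
    fun T' j => ⟨fun ⟨a, h1, h2⟩ => h2 ▸ h1, fun h => ⟨j, h, rfl⟩⟩
  congr 1
  · refine (Finset.sum_nbij' (i := fun T : Finset (Fin m) => T.map (Fin.succEmb m))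
      (j := fun T' => T'.preimage Fin.succ (Fin.succ_injective m).injOn)
      ?_ ?_ ?_ ?_ ?_).symm
    · intro T _
      simp only [Finset.mem_filter, Finset.mem_univ, true_and, Finset.mem_map]
      rintro ⟨x, _, hx⟩
      exact Fin.succ_ne_zero x hx
    · intro T' _; simp
    · intro T _
      ext j
      simp [Finset.mem_preimage]
    · intro T' hT'
      simp only [Finset.mem_filter, Finset.mem_univ, true_and] at hT'
      ext i
      induction i using Fin.cases with
      | zero =>
        simp only [Finset.mem_map, Finset.mem_preimage]
        constructor
        · rintro ⟨x, _, hx⟩; exact absurd hx (Fin.succ_ne_zero x)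
        · intro h; exact absurd h hT'
      | succ j =>
        simp only [Finset.mem_map, Finset.mem_preimage, Fin.succEmb, Function.Embedding.coeFn_mk]
        exact hmem T' j
    · intro T _; rfl
  · refine (Finset.sum_nbij' (i := fun T : Finset (Fin m) => insert 0 (T.map (Fin.succEmb m)))
      (j := fun T' => T'.preimage Fin.succ (Fin.succ_injective m).injOn)
      ?_ ?_ ?_ ?_ ?_).symm
    · intro T _; simp
    · intro T' _; simp
    · intro T _
      ext j
      simp [Finset.mem_preimage, Fin.succ_ne_zero]
    · intro T' hT'
      simp only [Finset.mem_filter, Finset.mem_univ, true_and, not_not] at hT'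
      ext i
      induction i using Fin.cases with
      | zero => simpa using hT'
      | succ j =>
        simp only [Finset.mem_insert, Finset.mem_map, Finset.mem_preimage, Fin.succEmb,
          Function.Embedding.coeFn_mk, (Fin.succ_ne_zero j), false_or]
        exact hmem T' j
    · intro T _; rfl

lemma compl_map (m : ℕ) (T : Finset (Fin m)) :
    (T.map (Fin.succEmb m))ᶜ = insert 0 (Tᶜ.map (Fin.succEmb m)) := by
  ext i
  induction i using Fin.cases with
  | zero => simp [fun x : Fin m => Fin.succ_ne_zero x]
  | succ j => simp [Fin.succ_ne_zero, Fin.succ_injective m |>.eq_iff]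
lemma compl_insert_map (m : ℕ) (T : Finset (Fin m)) :
    (insert (0 : Fin (m + 1)) (T.map (Fin.succEmb m)))ᶜ = Tᶜ.map (Fin.succEmb m) := by
  ext i
  induction i using Fin.cases with
  | zero => simp [fun x : Fin m => Fin.succ_ne_zero x]
  | succ j => simp [Fin.succ_ne_zero, Fin.succ_injective m |>.eq_iff]

lemma BS_succ (d : ℕ) (c : ℝ) :
    WV (d + 1) (fun _ => 0) c = ∫⁻ u : ℝ, WV d (fun _ => 0) (c - u ^ 2) := by
  rw [WV_succ d (fun _ => (0 : ℝ)) c]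
  congr 1
  ext t
  rw [exc_zero, sq_abs]
  rfl

lemma WV_eq_sum (m : ℕ) (a : Fin m → ℝ) (ha : ∀ i, 0 ≤ a i) (c : ℝ) :
    WV m a c = ∑ T : Finset (Fin m),
      (∏ i ∈ Tᶜ, ENNReal.ofReal (2 * a i)) * WV T.card (fun _ => 0) c := by
  induction m generalizing c with
  | zero =>
    have huniv : (Finset.univ : Finset (Finset (Fin 0))) = {∅} := rfl
    rw [huniv, Finset.sum_singleton]
    have h1 : ((∅ : Finset (Fin 0))ᶜ : Finset (Fin 0)) = ∅ := Subsingleton.elim _ _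
    rw [h1, Finset.prod_empty, one_mul, Finset.card_empty]
    exact WV_zero_eq a c
  | succ m ih =>
    rw [WV_succ m a c]
    calc
      ∫⁻ t : ℝ, WV m (a ∘ Fin.succ) (c - exc (a 0) t ^ 2)
          = ∫⁻ t : ℝ, ∑ T : Finset (Fin m), (∏ i ∈ Tᶜ, ENNReal.ofReal (2 * (a ∘ Fin.succ) i)) *
              WV T.card (fun _ => 0) (c - exc (a 0) t ^ 2) := by
            congr 1; ext t; exact ih (a ∘ Fin.succ) (fun i => ha i.succ) _
      _ = ∑ T : Finset (Fin m), ∫⁻ t : ℝ, (∏ i ∈ Tᶜ, ENNReal.ofReal (2 * (a ∘ Fin.succ) i)) *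
              WV T.card (fun _ => 0) (c - exc (a 0) t ^ 2) := by
            apply lintegral_finset_sum
            intro T _
            exact (WV_measurable_comp _ _ (measurable_const.sub
              (((exc_continuous (a 0)).measurable).pow_const 2))).const_mul _
      _ = ∑ T : Finset (Fin m), (∏ i ∈ Tᶜ, ENNReal.ofReal (2 * (a ∘ Fin.succ) i)) *
            (ENNReal.ofReal (2 * a 0) * WV T.card (fun _ => 0) c
              + WV (T.card + 1) (fun _ => 0) c) := by
            refine Finset.sum_congr rfl fun T _ => ?_
            rw [MeasureTheory.lintegral_const_mul _
              (f := fun t => WV T.card (fun _ => 0) (c - exc (a 0) t ^ 2)) (WV_measurable_comp _ _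
              (measurable_const.sub (((exc_continuous (a 0)).measurable).pow_const 2)))]
            congr 1
            have happ := lintegral_exc (ha 0)
              (fun v => WV T.card (fun _ => 0) (c - v ^ 2))
              (WV_measurable_comp _ _ (measurable_const.sub
                ((measurable_id.pow_const 2))))
            calc
              ∫⁻ t : ℝ, WV T.card (fun _ => 0) (c - exc (a 0) t ^ 2) =
                  ENNReal.ofReal (2 * a 0) * WV T.card (fun _ => 0) (c - 0 ^ 2)
                    + ∫⁻ u : ℝ, WV T.card (fun _ => 0) (c - |u| ^ 2) := happ
              _ = ENNReal.ofReal (2 * a 0) * WV T.card (fun _ => 0) c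
                    + WV (T.card + 1) (fun _ => 0) c := by
                  rw [BS_succ]
                  congr 1
                  · norm_num
                  · congr 1; ext u; rw [sq_abs]
      _ = ∑ T : Finset (Fin (m + 1)),
            (∏ i ∈ Tᶜ, ENNReal.ofReal (2 * a i)) * WV T.card (fun _ => 0) c := by
            rw [sum_split m (fun T' : Finset (Fin (m + 1)) =>
              (∏ i ∈ T'ᶜ, ENNReal.ofReal (2 * a i)) * WV T'.card (fun _ => 0) c)]
            rw [← Finset.sum_add_distrib]
            refine Finset.sum_congr rfl fun T _ => ?_
            rw [compl_map, compl_insert_map, Finset.card_map,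
              Finset.card_insert_of_notMem (by
                simp only [Finset.mem_map]
                rintro ⟨x, _, hx⟩
                exact Fin.succ_ne_zero x hx), Finset.card_map,
              Finset.prod_insert (by
                simp only [Finset.mem_map]
                rintro ⟨x, _, hx⟩
                exact Fin.succ_ne_zero x hx), Finset.prod_map]
            simp only [Fin.succEmb, Function.Embedding.coeFn_mk, Function.comp]
            ring


lemma volume_eucl_eq_pi {m : ℕ} (A : Set (Fin m → ℝ)) :
    volume {x : Eucl m | (fun i => x i) ∈ A} = volume A := by
  have MP := EuclideanSpace.volume_preserving_symm_measurableEquiv_toLp (Fin m)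
  have h : {x : Eucl m | (fun i => x i) ∈ A}
      = (⇑(MeasurableEquiv.toLp 2 (Fin m → ℝ)).symm) ⁻¹' A := rfl
  rw [h, MP.measure_preimage_equiv]

lemma volume_eucl_univ (m : ℕ) : volume (Set.univ : Set (Eucl m)) = volume (Set.univ : Set (Fin m → ℝ)) := by
  have := volume_eucl_eq_pi (m := m) Set.univ
  simpa using this

lemma kappa_pos (j : ℕ) : 0 < kappa j := by
  rw [kappa]
  apply ENNReal.toReal_pos
  · exact (measure_ball_pos volume 0 one_pos).ne'
  · exact measure_ball_lt_top.ne

lemma kappa_zero : kappa 0 = 1 := by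
  have hball : ball (0 : Eucl 0) 1 = Set.univ := by
    ext x
    simp only [mem_ball, Set.mem_univ, iff_true]
    have : x = 0 := Subsingleton.elim _ _
    rw [this, dist_self]; norm_num
  have huniv : volume (Set.univ : Set (Fin 0 → ℝ)) = 1 := by
    rw [volume_pi, ← Set.pi_univ Set.univ, Measure.pi_pi]
    simp
  rw [kappa, hball, volume_eucl_univ, huniv]
  simp

lemma BS_eq (d : ℕ) {ε : ℝ} (hε : 0 ≤ ε) :
    WV d (fun _ => 0) (ε ^ 2) = ENNReal.ofReal (kappa d * ε ^ d) := by
  have hset : {x : Fin d → ℝ | ∑ i, exc 0 (x i) ^ 2 ≤ ε ^ 2}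
      = {x : Fin d → ℝ | ∑ i, x i ^ 2 ≤ ε ^ 2} := by
    ext x
    have : ∀ i : Fin d, exc 0 (x i) ^ 2 = x i ^ 2 := fun i => by rw [exc_zero, sq_abs]
    simp only [Set.mem_setOf_eq]
    rw [Finset.sum_congr rfl fun i _ => this i]
  rw [WV, hset]
  rcases Nat.eq_zero_or_pos d with hd | hd
  · subst hd
    have h1 : {x : Fin 0 → ℝ | ∑ i, x i ^ 2 ≤ ε ^ 2} = Set.univ := by
      ext x; simp only [Set.mem_setOf_eq, Set.mem_univ, iff_true, Finset.univ_eq_empty,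
        Finset.sum_empty]
      positivity
    rw [h1, kappa_zero]
    have huniv : volume (Set.univ : Set (Fin 0 → ℝ)) = 1 := by
      rw [volume_pi, ← Set.pi_univ Set.univ, Measure.pi_pi]
      simp
    rw [huniv]
    simp
  · haveI : Nonempty (Fin d) := ⟨⟨0, hd⟩⟩
    have hcb : {x : Eucl d | (fun i => x i) ∈ {y : Fin d → ℝ | ∑ i, y i ^ 2 ≤ ε ^ 2}}
        = closedBall (0 : Eucl d) ε := by
      ext x
      simp only [Set.mem_setOf_eq, mem_closedBall, dist_zero_right]
      rw [EuclideanSpace.norm_eq, Real.sqrt_le_iff]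
      simp only [Real.norm_eq_abs, sq_abs]
      constructor
      · exact fun h => ⟨hε, h⟩
      · exact fun h => h.2
    rw [← volume_eucl_eq_pi, hcb]
    rw [EuclideanSpace.volume_closedBall]
    have hkap : kappa d = Real.sqrt Real.pi ^ d / Real.Gamma (d / 2 + 1) := by
      rw [kappa, EuclideanSpace.volume_ball]
      simp only [Fintype.card_fin]
      rw [ENNReal.ofReal_one, one_pow, one_mul, ENNReal.toReal_ofReal]
      positivity
    rw [hkap]
    simp only [Fintype.card_fin]
    rw [ENNReal.ofReal_mul (by positivity), mul_comm, ENNReal.ofReal_pow hε]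

lemma vol_box (n : ℕ) (a : Fin n → ℝ) (ha : ∀ i, 0 ≤ a i) {ε : ℝ} (hε : 0 ≤ ε) :
    (volume (cthickening ε (box n a))).toReal
      = ∑ T : Finset (Fin n), (∏ i ∈ Tᶜ, (2 * a i)) * (kappa T.card * ε ^ T.card) := by
  rw [cthickening_box ha hε]
  have h1 : {x : Eucl n | ∑ i, exc (a i) (x i) ^ 2 ≤ ε ^ 2}
      = {x : Eucl n |
          (fun i => x i) ∈ {y : Fin n → ℝ | ∑ i, exc (a i) (y i) ^ 2 ≤ ε ^ 2}} := rfl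
  rw [h1, volume_eucl_eq_pi]
  have h2 : volume {y : Fin n → ℝ | ∑ i, exc (a i) (y i) ^ 2 ≤ ε ^ 2} = WV n a (ε ^ 2) := rfl
  rw [h2, WV_eq_sum n a ha]
  have h3 : ∀ T : Finset (Fin n),
      (∏ i ∈ Tᶜ, ENNReal.ofReal (2 * a i)) * WV T.card (fun _ => 0) (ε ^ 2)
        = ENNReal.ofReal ((∏ i ∈ Tᶜ, (2 * a i)) * (kappa T.card * ε ^ T.card)) := by
    intro T
    rw [BS_eq T.card hε]
    rw [← ENNReal.ofReal_prod_of_nonneg (fun i _ => by have := ha i; positivity)]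
    rw [← ENNReal.ofReal_mul (Finset.prod_nonneg fun i _ => by have := ha i; positivity)]
  rw [Finset.sum_congr rfl fun T _ => h3 T]
  rw [ENNReal.toReal_sum (fun T _ => ENNReal.ofReal_ne_top)]
  refine Finset.sum_congr rfl fun T _ => ENNReal.toReal_ofReal ?_
  have hp1 : (0:ℝ) ≤ ∏ i ∈ Tᶜ, (2 * a i) := Finset.prod_nonneg fun i _ => by
    have := ha i; positivity
  have hp2 : (0:ℝ) ≤ kappa T.card * ε ^ T.card := by
    have := (kappa_pos T.card).le; positivity
  positivity

lemma intrinsicVolume_box (n k : ℕ) (hkn : k ≤ n) (a : Fin n → ℝ) (ha : ∀ i, 0 ≤ a i) :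
    intrinsicVolume k (box n a)
      = ∑ U ∈ Finset.powersetCard k (Finset.univ : Finset (Fin n)), ∏ i ∈ U, (2 * a i) := by
  classical
  set P : Polynomial ℝ := ∑ T : Finset (Fin n),
    Polynomial.C ((∏ i ∈ Tᶜ, (2 * a i)) * kappa T.card) * Polynomial.X ^ T.card with hP
  have heval : ∀ x : ℝ, 0 ≤ x → P.eval x
      = ∑ T : Finset (Fin n), (∏ i ∈ Tᶜ, (2 * a i)) * (kappa T.card * x ^ T.card) := by
    intro x hx
    rw [hP, Polynomial.eval_finset_sum]
    refine Finset.sum_congr rfl fun T _ => ?_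
    rw [Polynomial.eval_mul, Polynomial.eval_C, Polynomial.eval_pow, Polynomial.eval_X]
    ring
  have hdeg : P.degree < (Finset.range (n + 1)).card := by
    rw [Finset.card_range]
    refine lt_of_le_of_lt (Polynomial.degree_sum_le _ _) ?_
    rw [Finset.sup_lt_iff (by exact_mod_cast WithBot.bot_lt_coe (n + 1))]
    intro T _
    refine lt_of_le_of_lt (Polynomial.degree_mul_le _ _) ?_
    refine lt_of_le_of_lt (add_le_add Polynomial.degree_C_le (Polynomial.degree_X_pow _).le) ?_
    rw [zero_add]
    exact_mod_cast Nat.lt_succ_of_le (le_trans (Finset.card_le_univ T) (by simp))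
  have hInj : Set.InjOn (fun i : ℕ => (i : ℝ)) (Finset.range (n + 1)) :=
    fun i _ j _ h => Nat.cast_injective h
  have hinterp : Lagrange.interpolate (Finset.range (n + 1)) (fun i : ℕ => (i : ℝ))
      (fun i => (volume (cthickening ((i : ℕ) : ℝ) (box n a))).toReal) = P := by
    have h1 := Lagrange.eq_interpolate (v := fun i : ℕ => (i : ℝ)) (f := P) hInj hdeg
    rw [h1, Lagrange.interpolate_apply, Lagrange.interpolate_apply]
    refine Finset.sum_congr rfl fun i _ => ?_
    congr 1
    rw [vol_box n a ha (by positivity), heval _ (by positivity)]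
  rw [intrinsicVolume, hinterp, hP]
  rw [Polynomial.finset_sum_coeff]
  have hco : ∀ T : Finset (Fin n),
      (Polynomial.C ((∏ i ∈ Tᶜ, (2 * a i)) * kappa T.card) * Polynomial.X ^ T.card).coeff (n - k)
        = if n - k = T.card then (∏ i ∈ Tᶜ, (2 * a i)) * kappa T.card else 0 := by
    intro T
    rw [Polynomial.coeff_C_mul, Polynomial.coeff_X_pow]
    split_ifs <;> simp
  rw [Finset.sum_congr rfl fun T _ => hco T, ← Finset.sum_filter]
  have hk2 : ∀ T ∈ Finset.filter (fun T : Finset (Fin n) => n - k = T.card) Finset.univ,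
      (∏ i ∈ Tᶜ, (2 * a i)) * kappa T.card = (∏ i ∈ Tᶜ, (2 * a i)) * kappa (n - k) := by
    intro T hT
    rw [Finset.mem_filter] at hT
    rw [← hT.2]
  rw [Finset.sum_congr rfl hk2, ← Finset.sum_mul, mul_div_assoc,
    div_self (kappa_pos (n - k)).ne', mul_one]
  refine Finset.sum_nbij' (i := fun T : Finset (Fin n) => Tᶜ)
    (j := fun U : Finset (Fin n) => Uᶜ) ?_ ?_ ?_ ?_ ?_
  · intro T hT
    rw [Finset.mem_filter] at hT
    rw [Finset.mem_powersetCard]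
    refine ⟨Finset.subset_univ _, ?_⟩
    rw [Finset.card_compl, ← hT.2]
    simp only [Fintype.card_fin]
    omega
  · intro U hU
    rw [Finset.mem_powersetCard] at hU
    rw [Finset.mem_filter]
    refine ⟨Finset.mem_univ _, ?_⟩
    rw [Finset.card_compl, hU.2]
    simp only [Fintype.card_fin]
  · intro T _; exact compl_compl T
  · intro U _; exact compl_compl U
  · intro T _; rfl


lemma inner_eucl {n : ℕ} (x z : Eucl n) : ⟪x, z⟫ = ∑ i, x i * z i := by
  simp [PiLp.inner_apply, RCLike.inner_apply, mul_comm]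

lemma suppFn_box {n : ℕ} (a : Fin n → ℝ) (ha : ∀ i, 0 ≤ a i) (y : Eucl n) :
    suppFn (box n a) y = ∑ i, a i * |y i| := by
  apply IsGreatest.csSup_eq
  constructor
  · refine ⟨WithLp.toLp 2 (fun i => if 0 ≤ y i then a i else -(a i) : Fin n → ℝ), ?_, ?_⟩
    · intro i
      by_cases h : 0 ≤ y i <;> simp [h, abs_of_nonneg (ha i), abs_le, ha i]
    · dsimp only
      rw [inner_eucl]
      refine Finset.sum_congr rfl fun i _ => ?_
      by_cases h : 0 ≤ y i
      · simp only [PiLp.toLp_apply, if_pos h]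
        rw [abs_of_nonneg h, mul_comm]
      · simp only [PiLp.toLp_apply, if_neg h]
        push_neg at h
        rw [abs_of_neg h]; ring
  · rintro v ⟨z, hz, rfl⟩
    dsimp only
    rw [inner_eucl]
    refine Finset.sum_le_sum fun i _ => ?_
    calc y i * z i ≤ |y i * z i| := le_abs_self _
      _ = |z i| * |y i| := by rw [abs_mul, mul_comm]
      _ ≤ a i * |y i| := mul_le_mul_of_nonneg_right (hz i) (abs_nonneg _)

lemma wulff_eq_box {n : ℕ} (a : Fin n → ℝ) (ha : ∀ i, 0 ≤ a i) (f : Eucl n → ℝ)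
    (hub : ∀ y : Eucl n, ‖y‖ = 1 → (∑ i, a i * |y i|) ≤ f y)
    (hsingle : ∀ (i : Fin n) (σ : ℝ), σ = 1 ∨ σ = -1 →
      f (EuclideanSpace.single i σ) ≤ a i) :
    wulff f = box n a := by
  ext x
  constructor
  · intro hx i
    have h1 : ⟪x, EuclideanSpace.single i (1 : ℝ)⟫ ≤ f (EuclideanSpace.single i 1) :=
      hx _ (by rw [EuclideanSpace.norm_single]; norm_num)
    have h2 : ⟪x, EuclideanSpace.single i (-1 : ℝ)⟫ ≤ f (EuclideanSpace.single i (-1)) :=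
      hx _ (by rw [EuclideanSpace.norm_single]; norm_num)
    rw [real_inner_comm, EuclideanSpace.inner_single_left] at h1
    rw [real_inner_comm, EuclideanSpace.inner_single_left] at h2
    simp only [conj_trivial, one_mul, neg_one_mul, neg_mul] at h1 h2
    have ha1 := hsingle i 1 (Or.inl rfl)
    have ha2 := hsingle i (-1) (Or.inr rfl)
    rw [abs_le]
    constructor
    · nlinarith [h2.trans ha2]
    · exact h1.trans ha1
  · intro hx y hy
    rw [inner_eucl]
    calc ∑ i, x i * y i ≤ ∑ i, a i * |y i| := by
          refine Finset.sum_le_sum fun i _ => ?_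
          calc x i * y i ≤ |x i * y i| := le_abs_self _
            _ = |x i| * |y i| := abs_mul _ _
            _ ≤ a i * |y i| := mul_le_mul_of_nonneg_right (hx i) (abs_nonneg _)
      _ ≤ f y := hub y hy


/-! ### The cubes as boxes -/

lemma cubeK0_eq (n k : ℕ) : cubeK₀ n k
    = box n (fun i => if i ∈ Finset.univ.filter (fun j : Fin n => n - k ≤ (j : ℕ))
        then (1:ℝ) else 0) := by
  ext x
  simp only [cubeK₀, box, Set.mem_setOf_eq, Finset.mem_filter, Finset.mem_univ, true_and]
  constructor
  · rintro ⟨h1, h2⟩ i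
    by_cases h : n - k ≤ (i : ℕ)
    · rw [if_pos h]; exact h2 i h
    · rw [if_neg h, h1 i (by omega)]; simp
  · intro h
    constructor
    · intro j hj
      have hj2 := h j
      rw [if_neg (by omega)] at hj2
      exact abs_nonpos_iff.1 hj2
    · intro i hi
      have hi2 := h i
      rwa [if_pos hi] at hi2

lemma cubeK1_eq (n k : ℕ) : cubeK₁ n k
    = box n (fun i => if i ∈ Finset.univ.filter (fun j : Fin n => (j : ℕ) < k)
        then (1:ℝ) else 0) := by
  ext x
  simp only [cubeK₁, box, Set.mem_setOf_eq, Finset.mem_filter, Finset.mem_univ, true_and]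
  constructor
  · rintro ⟨h1, h2⟩ i
    by_cases h : (i : ℕ) < k
    · rw [if_pos h]; exact h1 i h
    · rw [if_neg h, h2 i (by omega)]; simp
  · intro h
    constructor
    · intro i hi
      have hi2 := h i
      rwa [if_pos hi] at hi2
    · intro j hj
      have hj2 := h j
      rw [if_neg (by omega)] at hj2
      exact abs_nonpos_iff.1 hj2

lemma card_filter_ge (n m : ℕ) :
    (Finset.univ.filter (fun i : Fin n => m ≤ (i : ℕ))).card = n - m := by
  rw [Finset.card_filter]
  rw [Fin.sum_univ_eq_sum_range (fun j => if m ≤ j then 1 else 0) n]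
  rw [← Finset.card_filter]
  have h : (Finset.range n).filter (fun j => m ≤ j) = Finset.Ico m n := by
    ext j
    simp only [Finset.mem_filter, Finset.mem_range, Finset.mem_Ico]
    omega
  rw [h, Nat.card_Ico]

lemma card_filter_lt' (n m : ℕ) (h : m ≤ n) :
    (Finset.univ.filter (fun i : Fin n => (i : ℕ) < m)).card = m := by
  rw [Finset.card_filter]
  rw [Fin.sum_univ_eq_sum_range (fun j => if j < m then 1 else 0) n]
  rw [← Finset.card_filter]
  have h2 : (Finset.range n).filter (fun j => j < m) = Finset.range m := by
    ext j
    simp only [Finset.mem_filter, Finset.mem_range]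
    omega
  rw [h2, Finset.card_range]

lemma card_Sp (n k : ℕ) (h2k : 2 * k ≤ n) :
    (Finset.univ.filter (fun i : Fin n => (i : ℕ) < k ∨ n - k ≤ (i : ℕ))).card = 2 * k := by
  rw [Finset.filter_or, Finset.card_union_of_disjoint]
  · rw [card_filter_lt' n k (by omega), card_filter_ge n (n - k)]; omega
  · rw [Finset.disjoint_left]
    intro i hi1 hi2
    rw [Finset.mem_filter] at hi1 hi2
    omega

/-! ### evaluating the symmetric sum for indicator boxes -/

lemma sum_powersetCard_ind (n k : ℕ) (S : Finset (Fin n)) (α : ℝ) (hkS : k ≤ S.card) :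
    ∑ U ∈ Finset.powersetCard k (Finset.univ : Finset (Fin n)),
      ∏ i ∈ U, (2 * (if i ∈ S then α else 0)) = (S.card.choose k : ℝ) * (2 * α) ^ k := by
  classical
  rw [← Finset.sum_filter_add_sum_filter_not (Finset.powersetCard k Finset.univ) (· ⊆ S)]
  have hz : ∀ U ∈ Finset.filter (fun U => ¬ U ⊆ S) (Finset.powersetCard k Finset.univ),
      ∏ i ∈ U, (2 * (if i ∈ S then α else 0)) = 0 := by
    intro U hU
    rw [Finset.mem_filter] at hU
    obtain ⟨i, hiU, hiS⟩ := Finset.not_subset.1 hU.2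
    exact Finset.prod_eq_zero hiU (by rw [if_neg hiS]; ring)
  rw [Finset.sum_congr rfl hz, Finset.sum_const_zero, add_zero]
  have hval : ∀ U ∈ Finset.filter (· ⊆ S) (Finset.powersetCard k Finset.univ),
      ∏ i ∈ U, (2 * (if i ∈ S then α else 0)) = (2 * α) ^ k := by
    intro U hU
    rw [Finset.mem_filter, Finset.mem_powersetCard] at hU
    rw [Finset.prod_congr rfl (fun i hi => by rw [if_pos (hU.2 hi)]), Finset.prod_const,
      hU.1.2]
  rw [Finset.sum_congr rfl hval, Finset.sum_const, nsmul_eq_mul]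
  congr 2
  have hfil : Finset.filter (· ⊆ S) (Finset.powersetCard k Finset.univ)
      = Finset.powersetCard k S := by
    ext U
    simp only [Finset.mem_filter, Finset.mem_powersetCard]
    constructor
    · rintro ⟨⟨_, hc⟩, hs⟩; exact ⟨hs, hc⟩
    · rintro ⟨hs, hc⟩; exact ⟨⟨Finset.subset_univ U, hc⟩, hs⟩
  rw [hfil, Finset.card_powersetCard]

/-! ### identification of the p-combination -/

lemma real_add_le_rpow {u v : ℝ} (hu : 0 ≤ u) (hv : 0 ≤ v) {p : ℝ} (hp : 0 < p)
    (hp1 : p ≤ 1) : u + v ≤ (u ^ p + v ^ p) ^ ((1:ℝ) / p) := by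
  have hN := NNReal.rpow_add_rpow_le (u.toNNReal) (v.toNNReal) hp hp1
  rw [NNReal.rpow_one, NNReal.rpow_one, one_div_one, NNReal.rpow_one] at hN
  have hcast : ((u.toNNReal + v.toNNReal : ℝ≥0) : ℝ) = u + v := by
    push_cast
    rw [Real.coe_toNNReal _ hu, Real.coe_toNNReal _ hv]
  have hcast2 : (((u.toNNReal ^ p + v.toNNReal ^ p) ^ ((1:ℝ) / p) : ℝ≥0) : ℝ)
      = (u ^ p + v ^ p) ^ ((1:ℝ) / p) := by
    rw [NNReal.coe_rpow, NNReal.coe_add, NNReal.coe_rpow, NNReal.coe_rpow,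
      Real.coe_toNNReal _ hu, Real.coe_toNNReal _ hv]
  calc u + v = ((u.toNNReal + v.toNNReal : ℝ≥0) : ℝ) := hcast.symm
    _ ≤ (((u.toNNReal ^ p + v.toNNReal ^ p) ^ ((1:ℝ) / p) : ℝ≥0) : ℝ) := by
        exact_mod_cast hN
    _ = _ := hcast2

lemma rpow_half_ineq {u v : ℝ} (hu : 0 ≤ u) (hv : 0 ≤ v) {p : ℝ} (hp : 0 < p)
    (hp1 : p ≤ 1) :
    (1/2 : ℝ) ^ ((1:ℝ)/p) * (u + v) ≤ ((1/2) * u ^ p + (1/2) * v ^ p) ^ ((1:ℝ)/p) := by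
  have h1 : ((1:ℝ)/2) * u ^ p + (1/2) * v ^ p = (1/2) * (u ^ p + v ^ p) := by ring
  rw [h1]
  have h2 : (0:ℝ) ≤ u ^ p + v ^ p := by positivity
  rw [Real.mul_rpow (by norm_num) h2]
  exact mul_le_mul_of_nonneg_left (real_add_le_rpow hu hv hp hp1)
    (Real.rpow_nonneg (by norm_num) _)

lemma suppFn_single (n : ℕ) (S : Finset (Fin n)) (i : Fin n) (σ : ℝ) :
    (∑ j, (if j ∈ S then (1:ℝ) else 0) * |(EuclideanSpace.single i σ : Eucl n) j|)
      = if i ∈ S then |σ| else 0 := by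
  have h : ∀ j : Fin n, (if j ∈ S then (1:ℝ) else 0) * |(EuclideanSpace.single i σ : Eucl n) j|
      = if j = i then (if j ∈ S then |σ| else 0) else 0 := by
    intro j
    rw [EuclideanSpace.single_apply]
    by_cases hj : j = i <;> by_cases hjS : j ∈ S <;> simp [hj, hjS]
  rw [Finset.sum_congr rfl fun j _ => h j, Finset.sum_ite_eq' Finset.univ i]
  simp

lemma pComb_eq (n k : ℕ) (h2k : 2 * k ≤ n) {p : ℝ} (hp : 0 < p) (hp1 : p < 1) :
    pComb p (1/2) (cubeK₀ n k) (cubeK₁ n k)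
      = box n (fun i => if i ∈ Finset.univ.filter
          (fun j : Fin n => (j : ℕ) < k ∨ n - k ≤ (j : ℕ)) then (1/2 : ℝ) ^ ((1:ℝ)/p)
          else 0) := by
  classical
  have hα : (0:ℝ) ≤ (1/2 : ℝ) ^ ((1:ℝ)/p) := Real.rpow_nonneg (by norm_num) _
  have h12 : (1 - 1/2 : ℝ) = 1/2 := by norm_num
  set S₀ := Finset.univ.filter (fun j : Fin n => n - k ≤ (j : ℕ)) with hS₀
  set S₁ := Finset.univ.filter (fun j : Fin n => (j : ℕ) < k) with hS₁
  set Sp := Finset.univ.filter (fun j : Fin n => (j : ℕ) < k ∨ n - k ≤ (j : ℕ)) with hSp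
  have hunion : Sp = S₁ ∪ S₀ := by rw [hSp, hS₁, hS₀, Finset.filter_or]
  have hdisj : Disjoint S₁ S₀ := by
    rw [Finset.disjoint_left]
    intro i hi1 hi0
    rw [hS₁, Finset.mem_filter] at hi1
    rw [hS₀, Finset.mem_filter] at hi0
    omega
  have ha0 : ∀ i : Fin n, (0:ℝ) ≤ if i ∈ S₀ then (1:ℝ) else 0 := by
    intro i; split <;> norm_num
  have ha1 : ∀ i : Fin n, (0:ℝ) ≤ if i ∈ S₁ then (1:ℝ) else 0 := by
    intro i; split <;> norm_num
  have hsupp0 : ∀ y : Eucl n, suppFn (cubeK₀ n k) y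
      = ∑ i, (if i ∈ S₀ then (1:ℝ) else 0) * |y i| := by
    intro y
    rw [cubeK0_eq n k, suppFn_box _ ha0 y]
  have hsupp1 : ∀ y : Eucl n, suppFn (cubeK₁ n k) y
      = ∑ i, (if i ∈ S₁ then (1:ℝ) else 0) * |y i| := by
    intro y
    rw [cubeK1_eq n k, suppFn_box _ ha1 y]
  have hsum : ∀ (S : Finset (Fin n)) (y : Eucl n),
      ∑ i, (if i ∈ S then (1:ℝ) else 0) * |y i| = ∑ i ∈ S, |y i| := by
    intro S y
    rw [Finset.sum_congr rfl (fun i _ => by rw [ite_mul, one_mul, zero_mul]),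
      Finset.sum_ite_mem, Finset.univ_inter]
  have hsum0 : ∀ y : Eucl n, (0:ℝ) ≤ ∑ i ∈ S₀, |y i| :=
    fun y => Finset.sum_nonneg fun i _ => abs_nonneg _
  have hsum1 : ∀ y : Eucl n, (0:ℝ) ≤ ∑ i ∈ S₁, |y i| :=
    fun y => Finset.sum_nonneg fun i _ => abs_nonneg _
  rw [pComb]
  simp only [h12]
  apply wulff_eq_box
  · intro i
    split
    · exact hα
    · exact le_refl 0
  · -- upper bound
    intro y hy
    have hL : ∑ i, (if i ∈ Sp then (1/2 : ℝ) ^ ((1:ℝ)/p) else 0) * |y i|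
        = (1/2 : ℝ) ^ ((1:ℝ)/p) * ((∑ i ∈ S₀, |y i|) + ∑ i ∈ S₁, |y i|) := by
      have h' : ∀ i : Fin n, (if i ∈ Sp then (1/2 : ℝ) ^ ((1:ℝ)/p) else 0) * |y i|
          = (1/2 : ℝ) ^ ((1:ℝ)/p) * (if i ∈ Sp then |y i| else 0) := by
        intro i; split <;> ring
      rw [Finset.sum_congr rfl fun i _ => h' i, ← Finset.mul_sum,
        Finset.sum_ite_mem, Finset.univ_inter, hunion,
        Finset.sum_union hdisj, add_comm]
    rw [hL, hsupp0, hsupp1, hsum, hsum]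
    exact rpow_half_ineq (hsum0 y) (hsum1 y) hp hp1.le
  · -- single vectors
    intro i σ hσ
    have habs : |σ| = 1 := by rcases hσ with rfl | rfl <;> norm_num
    rw [hsupp0, hsupp1, suppFn_single, suppFn_single, habs]
    by_cases hA : (i : ℕ) < k
    · have hiS1 : i ∈ S₁ := by rw [hS₁, Finset.mem_filter]; exact ⟨Finset.mem_univ _, hA⟩
      have hiS0 : i ∉ S₀ := by
        rw [hS₀, Finset.mem_filter]; push_neg; intro _; omega
      have hiSp : i ∈ Sp := by
        rw [hSp, Finset.mem_filter]; exact ⟨Finset.mem_univ _, Or.inl hA⟩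
      rw [if_pos hiS1, if_neg hiS0, if_pos hiSp]
      rw [Real.zero_rpow hp.ne', Real.one_rpow]
      norm_num
    · by_cases hB : n - k ≤ (i : ℕ)
      · have hiS1 : i ∉ S₁ := by
          rw [hS₁, Finset.mem_filter]; push_neg; intro _; omega
        have hiS0 : i ∈ S₀ := by rw [hS₀, Finset.mem_filter]; exact ⟨Finset.mem_univ _, hB⟩
        have hiSp : i ∈ Sp := by
          rw [hSp, Finset.mem_filter]; exact ⟨Finset.mem_univ _, Or.inr hB⟩
        rw [if_neg hiS1, if_pos hiS0, if_pos hiSp]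
        rw [Real.zero_rpow hp.ne', Real.one_rpow]
        norm_num
      · have hiS1 : i ∉ S₁ := by
          rw [hS₁, Finset.mem_filter]; push_neg; intro _; omega
        have hiS0 : i ∉ S₀ := by
          rw [hS₀, Finset.mem_filter]; push_neg; intro _; omega
        have hiSp : i ∉ Sp := by
          rw [hSp, Finset.mem_filter]; push_neg; intro _; omega
        rw [if_neg hiS1, if_neg hiS0, if_neg hiSp]
        rw [Real.zero_rpow hp.ne']
        have hz : ((1:ℝ)/2 * 0 + 1/2 * 0 : ℝ) = 0 := by ring
        rw [hz, Real.zero_rpow (one_div_ne_zero hp.ne')]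

end S17

/-- the counterexample in the case `k ≤ n/2`: for the two coordinate
`k`-cubes, `V_k(K_p) ≤ binom(2k,k) 2^{k-k/p}` while `V_k(K₀) = V_k(K₁) = 2^k`, so the
`p`-Brunn–Minkowski inequality for `V_k` fails whenever `p < k / log₂ binom(2k,k)`. -/
theorem statement17 (n k : ℕ) (hn : 3 ≤ n) (hk2 : 2 ≤ k) (hk : k ≤ n - 1)
    (hhalf : 2 * k ≤ n) :
    intrinsicVolume k (cubeK₀ n k) = 2 ^ k ∧
    intrinsicVolume k (cubeK₁ n k) = 2 ^ k ∧
    ∀ p : ℝ, 0 < p → p < 1 →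
      intrinsicVolume k (pComb p (1 / 2) (cubeK₀ n k) (cubeK₁ n k)) ≤
        ((2 * k).choose k : ℝ) * (2 : ℝ) ^ ((k : ℝ) - k / p) ∧
      (p < k / Real.logb 2 ((2 * k).choose k) →
        intrinsicVolume k (pComb p (1 / 2) (cubeK₀ n k) (cubeK₁ n k)) ^ (p / k) <
          (1 / 2) * intrinsicVolume k (cubeK₀ n k) ^ (p / k) +
            (1 / 2) * intrinsicVolume k (cubeK₁ n k) ^ (p / k)) := by
  classical
  have hkn : k ≤ n := by omega
  have hK0 : intrinsicVolume k (cubeK₀ n k) = 2 ^ k := by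
    rw [S17.cubeK0_eq n k,
      S17.intrinsicVolume_box n k hkn _ (fun i => by split <;> norm_num),
      S17.sum_powersetCard_ind n k _ 1 (by rw [S17.card_filter_ge]; omega),
      S17.card_filter_ge]
    have hnk : n - (n - k) = k := by omega
    rw [hnk, Nat.choose_self]
    norm_num
  have hK1 : intrinsicVolume k (cubeK₁ n k) = 2 ^ k := by
    rw [S17.cubeK1_eq n k,
      S17.intrinsicVolume_box n k hkn _ (fun i => by split <;> norm_num),
      S17.sum_powersetCard_ind n k _ 1 (by rw [S17.card_filter_lt' n k hkn]),
      S17.card_filter_lt' n k hkn, Nat.choose_self]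
    norm_num
  refine ⟨hK0, hK1, ?_⟩
  intro p hp hp1
  have hα : (0:ℝ) ≤ (1/2 : ℝ) ^ ((1:ℝ)/p) := Real.rpow_nonneg (by norm_num) _
  have hone : (1 : ℝ)/p = 1/p := rfl
  have hKp : intrinsicVolume k (pComb p (1/2) (cubeK₀ n k) (cubeK₁ n k))
      = (((2*k).choose k : ℕ) : ℝ) * (2 * (1/2 : ℝ) ^ ((1:ℝ)/p)) ^ k := by
    rw [S17.pComb_eq n k hhalf hp hp1,
      S17.intrinsicVolume_box n k hkn _
        (fun i => by split <;> [exact hα; exact le_refl 0]),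
      S17.sum_powersetCard_ind n k _ _ (by rw [S17.card_Sp n k hhalf]; omega),
      S17.card_Sp n k hhalf]
  have h2α : (2 * (1/2 : ℝ) ^ ((1:ℝ)/p)) ^ k = (2:ℝ) ^ ((k:ℝ) - (k:ℝ)/p) := by
    have hhalfpow : (1/2 : ℝ) ^ ((1:ℝ)/p) = (2:ℝ) ^ (-((1:ℝ)/p)) := by
      rw [Real.rpow_neg (by norm_num : (0:ℝ) ≤ 2), ← Real.inv_rpow (by norm_num : (0:ℝ) ≤ 2)]
      norm_num
    have ha2 : (2:ℝ) * (1/2 : ℝ) ^ ((1:ℝ)/p) = (2:ℝ) ^ (1 - (1:ℝ)/p) := by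
      rw [hhalfpow, Real.rpow_sub two_pos, Real.rpow_one, Real.rpow_neg
        (by norm_num : (0:ℝ) ≤ 2)]
      ring
    rw [ha2, ← Real.rpow_natCast ((2:ℝ) ^ (1 - (1:ℝ)/p)) k,
      ← Real.rpow_mul (by norm_num : (0:ℝ) ≤ 2)]
    congr 1
    field_simp
  constructor
  · rw [hKp, h2α]
  · intro hplt
    rw [hKp, h2α, hK0, hK1]
    set C : ℝ := (((2*k).choose k : ℕ) : ℝ) with hC
    have hC1 : (1:ℝ) < C := by
      have h1 : k + 1 ≤ (2*k).choose k := by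
        calc k + 1 = (k+1).choose k := (Nat.choose_succ_self_right k).symm
        _ ≤ (2*k).choose k := Nat.choose_le_choose k (by omega)
      have h2 : 1 < (2*k).choose k := by omega
      rw [hC]
      exact_mod_cast h2
    have hC0 : (0:ℝ) < C := by linarith
    have hLpos : 0 < Real.logb 2 C := Real.logb_pos one_lt_two hC1
    have hkR : (0:ℝ) < (k:ℝ) := by exact_mod_cast (by omega : 0 < k)
    rw [lt_div_iff₀ hLpos] at hplt
    have hpL : Real.logb 2 C * (p / (k:ℝ)) < 1 := by
      have h3 : p * Real.logb 2 C / (k:ℝ) < 1 := (div_lt_one hkR).2 hplt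
      calc Real.logb 2 C * (p/(k:ℝ)) = p * Real.logb 2 C / (k:ℝ) := by ring
      _ < 1 := h3
    have hCpk : C ^ (p / (k:ℝ)) < 2 := by
      have hC2 : C = (2:ℝ) ^ Real.logb 2 C := (Real.rpow_logb two_pos (by norm_num) hC0).symm
      calc C ^ (p / (k:ℝ)) = ((2:ℝ) ^ Real.logb 2 C) ^ (p/(k:ℝ)) := by rw [← hC2]
        _ = (2:ℝ) ^ (Real.logb 2 C * (p/(k:ℝ))) :=
            (Real.rpow_mul (by norm_num : (0:ℝ) ≤ 2) _ _).symm
        _ < 2 ^ (1:ℝ) := by rw [Real.rpow_lt_rpow_left_iff one_lt_two]; exact hpL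
        _ = 2 := Real.rpow_one 2
    have hexp : ((k:ℝ) - (k:ℝ)/p) * (p/(k:ℝ)) = p - 1 := by
      field_simp
    have hL1 : ((C * (2:ℝ) ^ ((k:ℝ) - (k:ℝ)/p)) : ℝ) ^ (p/(k:ℝ))
        = C ^ (p/(k:ℝ)) * (2:ℝ) ^ (p - 1) := by
      rw [Real.mul_rpow hC0.le (Real.rpow_nonneg (by norm_num) _)]
      congr 1
      rw [← Real.rpow_mul (by norm_num : (0:ℝ) ≤ 2), hexp]
    have h2k : ((2:ℝ) ^ k : ℝ) ^ (p/(k:ℝ)) = (2:ℝ) ^ p := by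
      rw [← Real.rpow_natCast 2 k, ← Real.rpow_mul (by norm_num : (0:ℝ) ≤ 2)]
      congr 1
      field_simp
    rw [hL1, h2k]
    calc C ^ (p/(k:ℝ)) * (2:ℝ) ^ (p-1) < 2 * (2:ℝ) ^ (p-1) :=
          mul_lt_mul_of_pos_right hCpk (Real.rpow_pos_of_pos two_pos _)
      _ = (2:ℝ) ^ p := by
          have h := (Real.rpow_add two_pos 1 (p-1)).symm
          rw [Real.rpow_one] at h
          rw [h]
          congr 1
          ring
      _ = 1/2 * (2:ℝ) ^ p + 1/2 * (2:ℝ) ^ p := by ring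
end
end
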